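/- arXiv:0911.4361 — 4 statements merged into one kernel-verified Lean document; each statement's English description precedes it below -/
import Mathlib

section
/- There exist constants c > 0 and n₀ such that for all n ≥ n₀, L_n ≥ c·n^{3/2}. -/
open Real Set
open scoped Pointwise

/-- Cross product of two planar vectors. -/
def cross (u v : ℝ × ℝ) : ℝ := u.1 * v.2 - u.2 * v.1

/-- `z 0, …, z (n-1)` are the vertices, in anticlockwise order, of a convex polygon. -/
def IsConvexPolygon (n : ℕ) (z : ℕ → ℝ × ℝ) : Prop :=
  (∀ i < n, z i ∉ convexHull ℝ (z '' {j | j < n ∧ j ≠ i})) ∧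
  (∀ i < n, 0 < cross (z ((i + 1) % n) - z (i % n)) (z ((i + 2) % n) - z ((i + 1) % n)))

/-- The (possibly asymmetric) norm determined by a convex body `D` with `0 ∈ int D`. -/
noncomputable def normD (D : Set (ℝ × ℝ)) (x : ℝ × ℝ) : ℝ :=
  sInf {t : ℝ | 0 ≤ t ∧ x ∈ t • D}

/-- The `D`-perimeter of the polygon with vertices `z 0, …, z (n-1)`. -/
noncomputable def perD (D : Set (ℝ × ℝ)) (n : ℕ) (z : ℕ → ℝ × ℝ) : ℝ :=
  ∑ i ∈ Finset.range n, normD D (z ((i + 1) % n) - z i)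

def IsLatticePt (p : ℝ × ℝ) : Prop := ∃ a b : ℤ, p = ((a : ℝ), (b : ℝ))

/-- The minimal `D`-perimeter of a convex lattice `n`-gon. -/
noncomputable def Ln (D : Set (ℝ × ℝ)) (n : ℕ) : ℝ :=
  sInf {p | ∃ z : ℕ → ℝ × ℝ, (∀ i < n, IsLatticePt (z i)) ∧ IsConvexPolygon n z ∧
    p = perD D n z}

namespace Stmt7Aux

lemma cross_add (v x y : ℝ × ℝ) : cross v (x + y) = cross v x + cross v y := by
  simp [cross]; ring

lemma cross_sub (v x y : ℝ × ℝ) : cross v (x - y) = cross v x - cross v y := by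
  simp [cross]; ring

lemma cross_smul (v : ℝ × ℝ) (r : ℝ) (x : ℝ × ℝ) : cross v (r • x) = r * cross v x := by
  simp [cross, Prod.smul_def]; ring

lemma cross_self (v : ℝ × ℝ) : cross v v = 0 := by simp [cross, mul_comm]

lemma exists_ratio (v u : ℝ × ℝ) (hv : v ≠ 0) (h : cross v u = 0) : ∃ r : ℝ, u = r • v := by
  rcases v with ⟨p, q⟩
  rcases u with ⟨x, y⟩
  simp only [cross] at h
  by_cases hp : p = 0
  · have hq : q ≠ 0 := by
      intro hq; exact hv (by simp [hp, hq, Prod.ext_iff])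
    refine ⟨y / q, ?_⟩
    have hx : x = 0 := by
      subst hp; field_simp at h; exact (mul_eq_zero.1 (by linarith : q * x = 0)).resolve_left hq
    ext <;> simp [Prod.smul_def, hp, hx] <;> field_simp
  · refine ⟨x / p, ?_⟩
    have hy : y = q * x / p := by field_simp; linarith [h]
    ext <;> simp [Prod.smul_def] <;> field_simp [hy] <;> linear_combination h

lemma seg3 (A v : ℝ × ℝ) (s t u : ℝ) (h1 : s ≤ t) (h2 : t ≤ u) (h3 : s < u) :
    A + t • v ∈ segment ℝ (A + s • v) (A + u • v) := by
  refine ⟨(u - t) / (u - s), (t - s) / (u - s), div_nonneg (by linarith) (by linarith), div_nonneg (by linarith) (by linarith), ?_, ?_⟩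
  · have hus : u - s ≠ 0 := by linarith
    field_simp; ring
  · have hus : u - s ≠ 0 := by linarith
    have key : ((u - t) / (u - s)) * s + ((t - s) / (u - s)) * u = t := by
      field_simp; ring
    have key2 : ((u - t) / (u - s)) + ((t - s) / (u - s)) = 1 := by
      field_simp; ring
    calc ((u - t) / (u - s)) • (A + s • v) + ((t - s) / (u - s)) • (A + u • v)
        = (((u - t) / (u - s)) + ((t - s) / (u - s))) • A
          + (((u - t) / (u - s)) * s + ((t - s) / (u - s)) * u) • v := by
          simp [smul_add, smul_smul, add_smul]; abel
      _ = A + t • v := by rw [key, key2, one_smul]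


lemma lineCase (v a b : ℝ × ℝ) (hv : v ≠ 0) (hcr : cross v (b - a) = 0)
    (h0 : b ≠ a) (h1 : b ≠ a + v) (h2 : b + v ≠ a) :
    a + v ∈ convexHull ℝ {a, b + v} ∨ b + v ∈ convexHull ℝ {a, a + v} ∨
      a ∈ convexHull ℝ {b + v, a + v} := by
  obtain ⟨r, hr⟩ := exists_ratio v (b - a) hv hcr
  have hb : b = a + r • v := by rw [← hr]; abel
  have hbv : b + v = a + (r + 1) • v := by rw [hb, add_smul, one_smul]; abel
  have hr0 : r ≠ 0 := by rintro rfl; simp at hb; exact h0 hb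
  have hr1 : r ≠ 1 := by rintro rfl; rw [one_smul] at hb; exact h1 hb
  have hrm1 : r ≠ -1 := by
    rintro rfl
    apply h2; rw [hbv]; norm_num
  rcases lt_trichotomy r 0 with hlt | heq | hgt
  · rcases lt_trichotomy (r + 1) 0 with hlt1 | heq1 | hgt1
    · right; right
      rw [convexHull_pair]
      have := seg3 a v (r + 1) 0 1 (by linarith) (by norm_num) (by linarith)
      simpa [← hbv] using this
    · exact absurd (by linarith : r = -1) hrm1
    · right; left
      rw [convexHull_pair]
      have := seg3 a v 0 (r + 1) 1 (by linarith) (by nlinarith [lt_of_le_of_ne (le_of_lt hlt) hr0]) (by norm_num)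
      simpa [← hbv] using this
  · exact absurd heq hr0
  · left
    rw [convexHull_pair]
    have := seg3 a v 0 1 (r + 1) (by norm_num) (by linarith) (by linarith)
    simpa [← hbv] using this

lemma midCase (v a b c : ℝ × ℝ) (hv : v ≠ 0)
    (h1 : cross v a < cross v b) (h2 : cross v b < cross v c) :
    b ∈ convexHull ℝ {a, a + v, c, c + v, b + v} ∨
      b + v ∈ convexHull ℝ {a, a + v, c, c + v, b} := by
  have hca : (0:ℝ) < cross v c - cross v a := by linarith
  set l : ℝ := (cross v c - cross v b) / (cross v c - cross v a) with hl
  have hl0 : 0 < l := by apply div_pos <;> linarith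
  have hl1 : l < 1 := by rw [div_lt_one hca]; linarith
  set p : ℝ × ℝ := l • a + (1 - l) • c with hp
  have hcrp : cross v (b - p) = 0 := by
    have hcp : cross v p = l * cross v a + (1 - l) * cross v c := by
      rw [hp, cross_add, cross_smul, cross_smul]
    have hmul : l * (cross v c - cross v a) = cross v c - cross v b := by
      rw [hl]; field_simp
    rw [cross_sub, hcp]
    nlinarith [hmul]
  obtain ⟨s, hs⟩ := exists_ratio v (b - p) hv hcrp
  have hb : b = p + s • v := by rw [← hs]; abel
  have hbv : b + v = p + (s + 1) • v := by rw [hb, add_smul, one_smul]; abel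
  -- p and p + v memberships
  have hpmem : ∀ S : Set (ℝ × ℝ), a ∈ S → c ∈ S → p ∈ convexHull ℝ S := by
    intro S haS hcS
    have : p ∈ segment ℝ a c :=
      ⟨l, 1 - l, le_of_lt hl0, by linarith, by ring, rfl⟩
    rw [← convexHull_pair] at this
    exact convexHull_mono (by intro x hx; rcases hx with rfl | hx; · exact haS
                              · rcases hx with rfl; exact hcS) this
  have hpv : p + v = l • (a + v) + (1 - l) • (c + v) := by
    simp [hp, smul_add]
    module
  have hpvmem : ∀ S : Set (ℝ × ℝ), (a + v) ∈ S → (c + v) ∈ S → p + v ∈ convexHull ℝ S := by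
    intro S haS hcS
    have : p + v ∈ segment ℝ (a + v) (c + v) :=
      ⟨l, 1 - l, le_of_lt hl0, by linarith, by ring, hpv.symm⟩
    rw [← convexHull_pair] at this
    exact convexHull_mono (by intro x hx; rcases hx with rfl | hx; · exact haS
                              · rcases hx with rfl; exact hcS) this
  rcases le_or_gt s (-1) with hsm | hs1
  · -- b + v ∈ segment b p  (params s < s+1 ≤ 0)
    right
    set S : Set (ℝ × ℝ) := {a, a + v, c, c + v, b}
    have hpS : p ∈ convexHull ℝ S := hpmem S (by simp [S]) (by simp [S])
    have hbS : b ∈ convexHull ℝ S := subset_convexHull ℝ S (by simp [S])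
    have hseg : b + v ∈ segment ℝ b p := by
      have := seg3 p v s (s + 1) 0 (by linarith) (by linarith) (by linarith)
      simpa [← hb, ← hbv] using this
    exact (convex_convexHull ℝ S).segment_subset hbS hpS hseg
  · rcases le_or_gt s 1 with hsle | hsgt
    · rcases le_or_gt 0 s with h0s | h0s
      · -- b between p and p+v
        left
        set S : Set (ℝ × ℝ) := {a, a + v, c, c + v, b + v}
        have hpS : p ∈ convexHull ℝ S := hpmem S (by simp [S]) (by simp [S])
        have hpvS : p + v ∈ convexHull ℝ S := hpvmem S (by simp [S]) (by simp [S])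
        have hseg : b ∈ segment ℝ p (p + v) := by
          have := seg3 p v 0 s 1 h0s hsle (by norm_num)
          simpa [← hb] using this
        exact (convex_convexHull ℝ S).segment_subset hpS hpvS hseg
      · -- -1 < s < 0 : b + v between p and p + v
        right
        set S : Set (ℝ × ℝ) := {a, a + v, c, c + v, b}
        have hpS : p ∈ convexHull ℝ S := hpmem S (by simp [S]) (by simp [S])
        have hpvS : p + v ∈ convexHull ℝ S := hpvmem S (by simp [S]) (by simp [S])
        have hseg : b + v ∈ segment ℝ p (p + v) := by
          have := seg3 p v 0 (s + 1) 1 (by linarith) (by linarith) (by norm_num)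
          simpa [← hbv] using this
        exact (convex_convexHull ℝ S).segment_subset hpS hpvS hseg
    · -- s > 1 : b between p+v and b+v
      left
      set S : Set (ℝ × ℝ) := {a, a + v, c, c + v, b + v}
      have hpvS : p + v ∈ convexHull ℝ S := hpvmem S (by simp [S]) (by simp [S])
      have hbvS : b + v ∈ convexHull ℝ S := subset_convexHull ℝ S (by simp [S])
      have hseg : b ∈ segment ℝ (p + v) (b + v) := by
        have := seg3 p v 1 s (s + 1) (le_of_lt hsgt) (by linarith) (by linarith)
        simpa [← hb, ← hbv] using this
      exact (convex_convexHull ℝ S).segment_subset hpvS hbvS hseg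


variable {n : ℕ} {z : ℕ → ℝ × ℝ}

lemma memim {a m : ℕ} (ha : a < n) (hne : a ≠ m) :
    z a ∈ z '' {j | j < n ∧ j ≠ m} := ⟨a, ⟨ha, hne⟩, rfl⟩

lemma badpt (hpoly : IsConvexPolygon n z) {m : ℕ} (hm : m < n) {S : Set (ℝ × ℝ)}
    (hS : S ⊆ z '' {j | j < n ∧ j ≠ m}) (hmem : z m ∈ convexHull ℝ S) : False :=
  hpoly.1 m hm (convexHull_mono hS hmem)

lemma zinj (hpoly : IsConvexPolygon n z) {i j : ℕ} (hi : i < n) (hj : j < n)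
    (hij : i ≠ j) : z i ≠ z j := by
  intro h
  exact badpt hpoly hi (Set.singleton_subset_iff.2 (memim hj (Ne.symm hij)))
    (h ▸ subset_convexHull ℝ _ (Set.mem_singleton _))

lemma edge_cross (hpoly : IsConvexPolygon n z) {i : ℕ} (hi : i < n) :
    0 < cross (z ((i + 1) % n) - z i)
        (z (((i + 1) % n + 1) % n) - z ((i + 1) % n)) := by
  have h := hpoly.2 i hi
  rw [Nat.mod_eq_of_lt hi] at h
  rwa [Nat.mod_add_mod, show i + 1 + 1 = i + 2 from rfl]

lemma edge_ne (hpoly : IsConvexPolygon n z) {i : ℕ} (hi : i < n) :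
    z ((i + 1) % n) - z i ≠ 0 := by
  intro h
  have h2 := hpoly.2 i hi
  rw [Nat.mod_eq_of_lt hi, h] at h2
  simp [cross] at h2

lemma succ_ne (hn : 2 ≤ n) {x : ℕ} (hx : x < n) : (x + 1) % n ≠ x := by
  rcases Nat.lt_or_ge (x + 1) n with h | h
  · rw [Nat.mod_eq_of_lt h]; omega
  · have : x + 1 = n := by omega
    rw [this, Nat.mod_self]; omega

lemma succ_inj {x y : ℕ} (hx : x < n) (hy : y < n) (h : (x + 1) % n = (y + 1) % n) :
    x = y := by
  rcases Nat.lt_or_ge (x + 1) n with h1 | h1 <;> rcases Nat.lt_or_ge (y + 1) n with h2 | h2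
  · rw [Nat.mod_eq_of_lt h1, Nat.mod_eq_of_lt h2] at h; omega
  · have : y + 1 = n := by omega
    rw [Nat.mod_eq_of_lt h1, this, Nat.mod_self] at h; omega
  · have : x + 1 = n := by omega
    rw [this, Nat.mod_self, Nat.mod_eq_of_lt h2] at h; omega
  · omega

/-- if edge y is the successor of edge x and they have equal vectors, contradiction -/
lemma adj_ne (hpoly : IsConvexPolygon n z) {x y : ℕ} (hx : x < n) (hy : y < n)
    (heq : z ((x + 1) % n) - z x = z ((y + 1) % n) - z y) : (x + 1) % n ≠ y := by
  intro h
  have h2 := edge_cross hpoly hx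
  rw [h] at h2 heq
  rw [← heq, cross_self] at h2
  exact lt_irrefl _ h2

lemma mult2 (hpoly : IsConvexPolygon n z) {i j k : ℕ} (hij : i < j) (hjk : j < k)
    (hk : k < n)
    (hvj : z ((i + 1) % n) - z i = z ((j + 1) % n) - z j)
    (hvk : z ((i + 1) % n) - z i = z ((k + 1) % n) - z k) : False := by
  have hn2 : 2 ≤ n := by omega
  have hi : i < n := by omega
  have hj : j < n := by omega
  set v := z ((i + 1) % n) - z i with hv
  have hvne : v ≠ 0 := edge_ne hpoly hi
  set i₁ := (i + 1) % n with hi₁d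
  set j₁ := (j + 1) % n with hj₁d
  set k₁ := (k + 1) % n with hk₁d
  have hi₁ : i₁ < n := Nat.mod_lt _ (by omega)
  have hj₁ : j₁ < n := Nat.mod_lt _ (by omega)
  have hk₁ : k₁ < n := Nat.mod_lt _ (by omega)
  -- index distinctness
  have dii₁ : i₁ ≠ i := succ_ne hn2 hi
  have djj₁ : j₁ ≠ j := succ_ne hn2 hj
  have dkk₁ : k₁ ≠ k := succ_ne hn2 hk
  have di₁j : i₁ ≠ j := adj_ne hpoly hi hj hvj
  have di₁k : i₁ ≠ k := adj_ne hpoly hi hk hvk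
  have dj₁i : j₁ ≠ i := adj_ne hpoly hj hi hvj.symm
  have dj₁k : j₁ ≠ k := adj_ne hpoly hj hk (hvj.symm.trans hvk)
  have dk₁i : k₁ ≠ i := adj_ne hpoly hk hi hvk.symm
  have dk₁j : k₁ ≠ j := adj_ne hpoly hk hj (hvk.symm.trans hvj)
  have di₁j₁ : i₁ ≠ j₁ := fun h => absurd (succ_inj hi hj h) (by omega)
  have di₁k₁ : i₁ ≠ k₁ := fun h => absurd (succ_inj hi hk h) (by omega)
  have dj₁k₁ : j₁ ≠ k₁ := fun h => absurd (succ_inj hj hk h) (by omega)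
  -- points
  have hA : z i₁ = z i + v := by rw [hv]; abel
  have hB : z j₁ = z j + v := by rw [hvj]; abel
  have hC : z k₁ = z k + v := by rw [hvk]; abel
  -- the `t`-values
  -- helper to conclude from lineCase on a pair (x, y) of indices
  have lineAbs : ∀ x y x' y' : ℕ, x < n → y < n → x' = (x + 1) % n → y' = (y + 1) % n →
      x ≠ y → x' ≠ y → y' ≠ x → x' ≠ x → y' ≠ y → x' ≠ y' →
      z x' = z x + v → z y' = z y + v →
      cross v (z y - z x) = 0 → False := by
    intro x y x' y' hx hy hx' hy' dxy dx'y dy'x dx'x dy'y dx'y' hzx hzy hcr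
    have hx'n : x' < n := by rw [hx']; exact Nat.mod_lt _ (by omega)
    have hy'n : y' < n := by rw [hy']; exact Nat.mod_lt _ (by omega)
    have h0 : z y ≠ z x := zinj hpoly hy hx (fun h => dxy h.symm)
    have h1 : z y ≠ z x + v := by rw [← hzx]; exact zinj hpoly hy hx'n (fun h => dx'y h.symm)
    have h2 : z y + v ≠ z x := by rw [← hzy]; exact zinj hpoly hy'n hx dy'x
    rcases lineCase v (z x) (z y) hvne hcr h0 h1 h2 with hc | hc | hc
    · refine badpt hpoly hx'n ?_ (by rwa [hzx])
      intro w hw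
      rcases hw with rfl | hw
      · exact memim hx (fun h => dx'x h.symm)
      · rcases hw with rfl; rw [← hzy]; exact memim hy'n (fun h => dx'y' h.symm)
    · refine badpt hpoly hy'n ?_ (by rwa [hzy])
      intro w hw
      rcases hw with rfl | hw
      · exact memim hx (fun h => dy'x h.symm)
      · rcases hw with rfl; rw [← hzx]; exact memim hx'n dx'y'
    · refine badpt hpoly hx ?_ hc
      intro w hw
      rcases hw with rfl | hw
      · rw [← hzy]; exact memim hy'n dy'x
      · rcases hw with rfl; rw [← hzx]; exact memim hx'n dx'x
  -- helper for midCase: middle index y, outer x and w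
  have midAbs : ∀ x y w x' y' w' : ℕ, x < n → y < n → w < n →
      x' = (x + 1) % n → y' = (y + 1) % n → w' = (w + 1) % n →
      x ≠ y → x ≠ w → y ≠ w → x' ≠ y → x' ≠ w → y' ≠ x → y' ≠ w → w' ≠ x → w' ≠ y →
      x' ≠ x → y' ≠ y → w' ≠ w → x' ≠ y' → x' ≠ w' → y' ≠ w' →
      z x' = z x + v → z y' = z y + v → z w' = z w + v →
      cross v (z x) < cross v (z y) → cross v (z y) < cross v (z w) → False := by
    intro x y w x' y' w' hx hy hw hx' hy' hw' dxy dxw dyw dx'y dx'w dy'x dy'w dw'x dw'y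
      dx'x dy'y dw'w dx'y' dx'w' dy'w' hzx hzy hzw hlt1 hlt2
    have hx'n : x' < n := by rw [hx']; exact Nat.mod_lt _ (by omega)
    have hy'n : y' < n := by rw [hy']; exact Nat.mod_lt _ (by omega)
    have hw'n : w' < n := by rw [hw']; exact Nat.mod_lt _ (by omega)
    rcases midCase v (z x) (z y) (z w) hvne hlt1 hlt2 with hc | hc
    · refine badpt hpoly hy (S := {z x, z x + v, z w, z w + v, z y + v}) ?_ ?_
      · intro u hu
        rcases hu with rfl | hu
        · exact memim hx dxy
        rcases hu with rfl | hu
        · rw [← hzx]; exact memim hx'n dx'y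
        rcases hu with rfl | hu
        · exact memim hw (fun h => dyw h.symm)
        rcases hu with rfl | hu
        · rw [← hzw]; exact memim hw'n dw'y
        · rcases hu with rfl; rw [← hzy]; exact memim hy'n dy'y
      · exact hc
    · refine badpt hpoly hy'n (S := {z x, z x + v, z w, z w + v, z y}) ?_ ?_
      · intro u hu
        rcases hu with rfl | hu
        · exact memim hx (fun h => dy'x h.symm)
        rcases hu with rfl | hu
        · rw [← hzx]; exact memim hx'n dx'y'
        rcases hu with rfl | hu
        · exact memim hw (fun h => dy'w h.symm)
        rcases hu with rfl | hu
        · rw [← hzw]; exact memim hw'n (fun h => (dy'w' h.symm).elim)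
        · rcases hu with rfl; exact memim hy (fun h => dy'y h.symm)
      · rw [hzy]; exact hc
  -- now do trichotomy on the three cross values
  clear_value i₁ j₁ k₁
  have lineIJ : cross v (z i) = cross v (z j) → False := fun h =>
    lineAbs i j i₁ j₁ hi hj hi₁d hj₁d (by omega) (by omega) (by omega) (by omega)
      (by omega) (by omega) hA hB (by rw [cross_sub]; linarith)
  have lineIK : cross v (z i) = cross v (z k) → False := fun h =>
    lineAbs i k i₁ k₁ hi hk hi₁d hk₁d (by omega) (by omega) (by omega) (by omega)
      (by omega) (by omega) hA hC (by rw [cross_sub]; linarith)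
  have lineJK : cross v (z j) = cross v (z k) → False := fun h =>
    lineAbs j k j₁ k₁ hj hk hj₁d hk₁d (by omega) (by omega) (by omega) (by omega)
      (by omega) (by omega) hB hC (by rw [cross_sub]; linarith)
  rcases lt_trichotomy (cross v (z i)) (cross v (z j)) with h1 | h1 | h1
  · rcases lt_trichotomy (cross v (z j)) (cross v (z k)) with h2 | h2 | h2
    · exact midAbs i j k i₁ j₁ k₁ hi hj hk hi₁d hj₁d hk₁d (by omega) (by omega)
        (by omega) (by omega) (by omega) (by omega) (by omega) (by omega) (by omega)
        (by omega) (by omega) (by omega) (by omega) (by omega) (by omega)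
        hA hB hC h1 h2
    · exact lineJK h2
    · rcases lt_trichotomy (cross v (z i)) (cross v (z k)) with h3 | h3 | h3
      · exact midAbs i k j i₁ k₁ j₁ hi hk hj hi₁d hk₁d hj₁d (by omega) (by omega)
          (by omega) (by omega) (by omega) (by omega) (by omega) (by omega) (by omega)
          (by omega) (by omega) (by omega) (by omega) (by omega) (by omega)
          hA hC hB h3 h2
      · exact lineIK h3
      · exact midAbs k i j k₁ i₁ j₁ hk hi hj hk₁d hi₁d hj₁d (by omega) (by omega)
          (by omega) (by omega) (by omega) (by omega) (by omega) (by omega) (by omega)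
          (by omega) (by omega) (by omega) (by omega) (by omega) (by omega)
          hC hA hB h3 h1
  · exact lineIJ h1
  · rcases lt_trichotomy (cross v (z i)) (cross v (z k)) with h2 | h2 | h2
    · exact midAbs j i k j₁ i₁ k₁ hj hi hk hj₁d hi₁d hk₁d (by omega) (by omega)
        (by omega) (by omega) (by omega) (by omega) (by omega) (by omega) (by omega)
        (by omega) (by omega) (by omega) (by omega) (by omega) (by omega)
        hB hA hC h1 h2
    · exact lineIK h2
    · rcases lt_trichotomy (cross v (z j)) (cross v (z k)) with h3 | h3 | h3
      · exact midAbs j k i j₁ k₁ i₁ hj hk hi hj₁d hk₁d hi₁d (by omega) (by omega)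
          (by omega) (by omega) (by omega) (by omega) (by omega) (by omega) (by omega)
          (by omega) (by omega) (by omega) (by omega) (by omega) (by omega)
          hB hC hA h3 h2
      · exact lineJK h3
      · exact midAbs k j i k₁ j₁ i₁ hk hj hi hk₁d hj₁d hi₁d (by omega) (by omega)
          (by omega) (by omega) (by omega) (by omega) (by omega) (by omega) (by omega)
          (by omega) (by omega) (by omega) (by omega) (by omega) (by omega)
          hC hB hA h3 h1


lemma sum_norm_ge {n : ℕ} (hn : 36 ≤ n) (v : ℕ → ℝ × ℝ)
    (hlat : ∀ i < n, ∃ a b : ℤ, v i = ((a : ℝ), (b : ℝ)))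
    (hmult : ∀ i j k : ℕ, i < j → j < k → k < n → v i = v j → v i = v k → False) :
    (n : ℝ) * Real.sqrt n / 12 ≤ ∑ i ∈ Finset.range n, ‖v i‖ := by
  classical
  set R : ℝ := Real.sqrt n / 6 with hR
  have hn0 : (0:ℝ) ≤ (n:ℝ) := by positivity
  have hsq : (6:ℝ) ≤ Real.sqrt n := by
    have : Real.sqrt 36 ≤ Real.sqrt n := Real.sqrt_le_sqrt (by exact_mod_cast hn)
    rwa [show (36:ℝ) = 6 ^ 2 by norm_num, Real.sqrt_sq (by norm_num : (0:ℝ) ≤ 6)] at this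
  have hR1 : (1:ℝ) ≤ R := by rw [hR]; linarith
  set G : Finset ℕ := (Finset.range n).filter (fun i => ‖v i‖ ≤ R) with hG
  -- multiplicity bound on fibers
  have hfiber : ∀ w ∈ G.image v, (G.filter (fun i => v i = w)).card ≤ 2 := by
    intro w _
    by_contra hcon
    push_neg at hcon
    obtain ⟨a, b, c, ha, hb, hc, hab, hac, hbc⟩ := Finset.two_lt_card_iff.1 hcon
    have va : v a = w := (Finset.mem_filter.1 ha).2
    have vb : v b = w := (Finset.mem_filter.1 hb).2
    have vc : v c = w := (Finset.mem_filter.1 hc).2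
    have han : a < n := Finset.mem_range.1 (Finset.mem_filter.1 ((Finset.mem_filter.1 ha).1)).1
    have hbn : b < n := Finset.mem_range.1 (Finset.mem_filter.1 ((Finset.mem_filter.1 hb).1)).1
    have hcn : c < n := Finset.mem_range.1 (Finset.mem_filter.1 ((Finset.mem_filter.1 hc).1)).1
    -- order a b c and apply hmult
    have key : ∀ x y t : ℕ, x < y → y < t → t < n → v x = w → v y = w → v t = w → False := by
      intro x y t hxy hyt htn h1 h2 h3
      exact hmult x y t hxy hyt htn (h1.trans h2.symm) (h1.trans h3.symm)
    rcases lt_trichotomy a b with h1 | h1 | h1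
    · rcases lt_trichotomy b c with h2 | h2 | h2
      · exact key a b c h1 h2 hcn va vb vc
      · exact hbc h2
      · rcases lt_trichotomy a c with h3 | h3 | h3
        · exact key a c b h3 h2 hbn va vc vb
        · exact hac h3
        · exact key c a b h3 h1 hbn vc va vb
    · exact hab h1
    · rcases lt_trichotomy a c with h2 | h2 | h2
      · exact key b a c h1 h2 hcn vb va vc
      · exact hac h2
      · rcases lt_trichotomy b c with h3 | h3 | h3
        · exact key b c a h3 h2 han vb vc va
        · exact hbc h3
        · exact key c b a h3 h1 han vc vb va
  have hGcard : G.card ≤ 2 * (G.image v).card := Finset.card_le_mul_card_image G 2 hfiber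
  -- bound the image cardinality by lattice points in a square
  set N : ℤ := ⌊R⌋ with hNd
  have hN1 : (1:ℤ) ≤ N := Int.le_floor.2 (by exact_mod_cast hR1)
  have hNR : (N : ℝ) ≤ R := Int.floor_le R
  have himg : (G.image v).card ≤ ((Finset.Icc (-N) N) ×ˢ (Finset.Icc (-N) N)).card := by
    apply Finset.card_le_card_of_injOn (fun w => (⌊w.1⌋, ⌊w.2⌋))
    · intro w hw
      obtain ⟨i, hiG, hiw⟩ := Finset.mem_image.1 hw
      have hiR : ‖v i‖ ≤ R := (Finset.mem_filter.1 hiG).2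
      have hin : i < n := Finset.mem_range.1 (Finset.mem_filter.1 hiG).1
      obtain ⟨a, b, hab⟩ := hlat i hin
      subst hiw
      rw [hab] at hiR ⊢
      have h1 : |(a:ℝ)| ≤ R := by
        refine le_trans ?_ hiR
        rw [Prod.norm_def]
        exact le_max_of_le_left (le_of_eq (Real.norm_eq_abs _).symm)
      have h2 : |(b:ℝ)| ≤ R := by
        refine le_trans ?_ hiR
        rw [Prod.norm_def]
        exact le_max_of_le_right (le_of_eq (Real.norm_eq_abs _).symm)
      simp only [Int.floor_intCast, Finset.mem_product, Finset.mem_Icc]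
      rw [abs_le] at h1 h2
      have haN : a ≤ N := Int.le_floor.2 (by exact_mod_cast h1.2)
      have haN' : -a ≤ N := Int.le_floor.2 (by push_cast; linarith [h1.1])
      have hbN : b ≤ N := Int.le_floor.2 (by exact_mod_cast h2.2)
      have hbN' : -b ≤ N := Int.le_floor.2 (by push_cast; linarith [h2.1])
      exact Finset.mem_product.2 ⟨Finset.mem_Icc.2 ⟨by omega, haN⟩, Finset.mem_Icc.2 ⟨by omega, hbN⟩⟩
    · intro w hw w' hw' heq
      obtain ⟨i, hiG, hiw⟩ := Finset.mem_image.1 hw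
      obtain ⟨i', hiG', hiw'⟩ := Finset.mem_image.1 hw'
      have hin : i < n := Finset.mem_range.1 (Finset.mem_filter.1 hiG).1
      have hin' : i' < n := Finset.mem_range.1 (Finset.mem_filter.1 hiG').1
      obtain ⟨a, b, hab⟩ := hlat i hin
      obtain ⟨a', b', hab'⟩ := hlat i' hin'
      subst hiw; subst hiw'
      rw [hab, hab'] at heq ⊢
      simp only [Int.floor_intCast, Prod.mk.injEq] at heq
      rw [heq.1, heq.2]
  -- so the card of G is at most n / 2
  have hsquare : (((Finset.Icc (-N) N) ×ˢ (Finset.Icc (-N) N)).card : ℝ) = (2 * (N:ℝ) + 1) ^ 2 := by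
    have e : N + 1 - -N = 2 * N + 1 := by ring
    rw [Finset.card_product, Int.card_Icc, e]
    have h2N : (0:ℤ) ≤ 2 * N + 1 := by omega
    have e2 : (((2 * N + 1).toNat : ℕ) : ℝ) = 2 * (N:ℝ) + 1 := by
      rw [← Int.cast_natCast (R := ℝ), Int.toNat_of_nonneg h2N]
      push_cast
      ring
    rw [Nat.cast_mul, e2]
    ring
  have hGR : (G.card : ℝ) ≤ (n : ℝ) / 2 := by
    have c1 : (G.card : ℝ) ≤ 2 * ((2 * (N:ℝ) + 1) ^ 2) := by
      calc (G.card : ℝ) ≤ 2 * ((G.image v).card : ℝ) := by exact_mod_cast hGcard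
        _ ≤ 2 * (((Finset.Icc (-N) N) ×ˢ (Finset.Icc (-N) N)).card : ℝ) := by
            have h := (Nat.cast_le (α := ℝ)).2 himg; linarith
        _ = 2 * ((2 * (N:ℝ) + 1) ^ 2) := by rw [hsquare]
    have hN1R : (1:ℝ) ≤ (N:ℝ) := by exact_mod_cast hN1
    have c2 : 2 * (N:ℝ) + 1 ≤ 3 * R := by linarith
    have c3 : (2 * (N:ℝ) + 1) ^ 2 ≤ 9 * R ^ 2 := by nlinarith
    have hR2 : R ^ 2 = (n : ℝ) / 36 := by
      rw [hR]; rw [div_pow, Real.sq_sqrt hn0]; norm_num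
    calc (G.card : ℝ) ≤ 2 * ((2 * (N:ℝ) + 1) ^ 2) := c1
      _ ≤ 18 * R ^ 2 := by linarith
      _ = (n : ℝ) / 2 := by rw [hR2]; ring
  -- the complement has many elements, each with big norm
  set Gc : Finset ℕ := (Finset.range n) \ G with hGc
  have hGsub : G ⊆ Finset.range n := Finset.filter_subset _ _
  have hGccard : ((n : ℝ) / 2) ≤ (Gc.card : ℝ) := by
    have : Gc.card = n - G.card := by rw [hGc, Finset.card_sdiff_of_subset hGsub, Finset.card_range]
    have hGle : G.card ≤ n := le_trans (Finset.card_le_card hGsub) (le_of_eq (Finset.card_range n))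
    rw [this]
    push_cast [Nat.cast_sub hGle]
    linarith
  have hbig : ∀ i ∈ Gc, R ≤ ‖v i‖ := by
    intro i hi
    rw [hGc, Finset.mem_sdiff] at hi
    by_contra hcon
    push_neg at hcon
    exact hi.2 (Finset.mem_filter.2 ⟨hi.1, le_of_lt hcon⟩)
  have hR0 : (0:ℝ) ≤ R := by linarith
  calc (n : ℝ) * Real.sqrt n / 12 = ((n:ℝ) / 2) * R := by rw [hR]; ring
    _ ≤ (Gc.card : ℝ) * R := by gcongr
    _ = ∑ _i ∈ Gc, R := by rw [Finset.sum_const, nsmul_eq_mul]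
    _ ≤ ∑ i ∈ Gc, ‖v i‖ := Finset.sum_le_sum hbig
    _ ≤ ∑ i ∈ Finset.range n, ‖v i‖ := by
        apply Finset.sum_le_sum_of_subset_of_nonneg (Finset.sdiff_subset)
        intro i _ _
        exact norm_nonneg _


lemma normD_ge (D : Set (ℝ × ℝ)) (hDcp : IsCompact D) (hD0 : (0:ℝ×ℝ) ∈ interior D) :
    ∃ M : ℝ, 0 < M ∧ ∀ x : ℝ × ℝ, ‖x‖ / M ≤ normD D x := by
  obtain ⟨r, hr⟩ := (Metric.isBounded_iff_subset_closedBall (0:ℝ×ℝ)).1 hDcp.isBounded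
  set M : ℝ := max r 1 with hM
  have hM0 : (0:ℝ) < M := lt_of_lt_of_le one_pos (le_max_right _ _)
  have hDM : D ⊆ Metric.closedBall 0 M :=
    hr.trans (Metric.closedBall_subset_closedBall (le_max_left _ _))
  obtain ⟨ε, hε0, hεD⟩ := Metric.mem_nhds_iff.1 (mem_interior_iff_mem_nhds.1 hD0)
  refine ⟨M, hM0, fun x => ?_⟩
  apply le_csInf
  · -- nonempty
    set t : ℝ := ‖x‖ / ε + 1 with ht
    have ht0 : 0 < t := by positivity
    refine ⟨t, le_of_lt ht0, ?_⟩
    refine ⟨t⁻¹ • x, ?_, smul_inv_smul₀ (ne_of_gt ht0) x⟩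
    apply hεD
    rw [Metric.mem_ball, dist_zero_right, norm_smul, norm_inv, Real.norm_eq_abs,
      abs_of_pos ht0]
    rw [inv_mul_lt_iff₀ ht0]
    have : ε * t = ‖x‖ + ε := by rw [ht]; field_simp
    rw [mul_comm, this]
    linarith
  · rintro s ⟨hs0, d, hdD, hds⟩
    have hnd : ‖d‖ ≤ M := by
      have := hDM hdD
      rwa [Metric.mem_closedBall, dist_zero_right] at this
    have : ‖x‖ ≤ s * M := by
      rw [← hds, norm_smul, Real.norm_eq_abs, abs_of_nonneg hs0]
      exact mul_le_mul_of_nonneg_left hnd hs0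
    rw [div_le_iff₀ hM0]
    linarith


lemma exposed_helper (S : Set (ℝ × ℝ)) (u : ℝ × ℝ) (cv : ℝ)
    (hS : ∀ y ∈ S, u.1 * y.1 + u.2 * y.2 < cv) (x : ℝ × ℝ)
    (hx : u.1 * x.1 + u.2 * x.2 = cv) : x ∉ convexHull ℝ S := by
  intro hmem
  have hlin : IsLinearMap ℝ (fun y : ℝ × ℝ => u.1 * y.1 + u.2 * y.2) :=
    ⟨fun p q => by simp; ring, fun c p => by simp [Prod.smul_def]; ring⟩
  have h2 : u.1 * x.1 + u.2 * x.2 < cv := convexHull_min hS (convex_halfSpace_lt hlin cv) hmem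
  linarith

lemma exists_polygon (n : ℕ) (hn : 5 ≤ n) :
    ∃ z : ℕ → ℝ × ℝ, (∀ i < n, IsLatticePt (z i)) ∧ IsConvexPolygon n z := by
  set H : ℕ := (n - 2) ^ 2 + 1 with hH
  set w : ℕ → ℝ × ℝ := fun i => if i = n - 1 then ((0 : ℝ), (H : ℝ)) else ((i : ℝ), (i : ℝ) ^ 2)
    with hw
  have hn0 : 0 < n := by omega
  have wdef : ∀ i, i ≠ n - 1 → w i = ((i : ℝ), (i : ℝ) ^ 2) := fun i h => by
    simp only [hw]; rw [if_neg h]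
  have wapex : w (n - 1) = ((0 : ℝ), (H : ℝ)) := by simp only [hw]; simp
  refine ⟨w, ?_, ?_, ?_⟩
  · -- lattice
    intro i _
    by_cases h : i = n - 1
    · exact ⟨0, (H : ℤ), by simp [hw, h]⟩
    · refine ⟨(i : ℤ), (i : ℤ) ^ 2, ?_⟩
      simp only [hw, if_neg h]
      push_cast
      rfl
  · -- hull condition
    intro i hi
    by_cases h : i = n - 1
    · -- apex
      subst h
      apply exposed_helper _ ((0 : ℝ), (1 : ℝ)) (H : ℝ)
      · rintro y ⟨j, ⟨hjn, hjne⟩, rfl⟩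
        rw [wdef j hjne]
        have hj2 : j ≤ n - 2 := by omega
        have hcast : (j : ℝ) ≤ ((n - 2 : ℕ) : ℝ) := by exact_mod_cast hj2
        have hj0 : (0 : ℝ) ≤ (j : ℝ) := by positivity
        have : (j : ℝ) ^ 2 ≤ ((n - 2 : ℕ) : ℝ) ^ 2 := by nlinarith
        have hHc : ((H : ℕ) : ℝ) = ((n - 2 : ℕ) : ℝ) ^ 2 + 1 := by rw [hH]; push_cast; ring
        dsimp only
        rw [hHc]
        nlinarith
      · rw [wapex]; simp
    · -- parabola point
      apply exposed_helper _ ((2 * i : ℝ), (-1 : ℝ)) ((i : ℝ) ^ 2)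
      · rintro y ⟨j, ⟨hjn, hjne⟩, rfl⟩
        by_cases hj : j = n - 1
        · subst hj
          rw [wapex]
          have : (0 : ℝ) < (H : ℝ) := by rw [hH]; push_cast; positivity
          dsimp only
          nlinarith [sq_nonneg (i : ℝ)]
        · rw [wdef j hj]
          have hij : (i : ℝ) ≠ (j : ℝ) := by
            intro hc; exact hjne (by exact_mod_cast hc.symm)
          have : ((i : ℝ) - (j : ℝ)) ^ 2 > 0 := by
            apply sq_pos_of_ne_zero; intro hc; apply hij; linarith [sub_eq_zero.1 hc]
          dsimp only
          nlinarith
      · rw [wdef i h]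
        dsimp only
        ring
  · -- cross condition
    intro i hi
    rw [Nat.mod_eq_of_lt hi]
    rcases eq_or_ne i (n - 1) with h1 | h1
    · -- wrap-around
      subst h1
      have e1 : (n - 1 + 1) % n = 0 := by
        rw [Nat.sub_add_cancel (by omega : 1 ≤ n), Nat.mod_self]
      have e2 : (n - 1 + 2) % n = 1 := by
        rw [show n - 1 + 2 = n + 1 from by omega, Nat.add_mod_left, Nat.mod_eq_of_lt (by omega)]
      rw [e1, e2]
      have w0 : w 0 = ((0 : ℝ), (0 : ℝ)) := by rw [wdef 0 (by omega)]; norm_num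
      have w1 : w 1 = ((1 : ℝ), (1 : ℝ)) := by rw [wdef 1 (by omega)]; norm_num
      rw [w0, w1, wapex]
      have : (0 : ℝ) < (H : ℝ) := by rw [hH]; push_cast; positivity
      simp only [cross, Prod.fst_sub, Prod.snd_sub]
      nlinarith
    · rcases eq_or_ne i (n - 2) with h2 | h2
      · -- second to last
        subst h2
        have e1 : (n - 2 + 1) % n = n - 1 := by
          rw [show n - 2 + 1 = n - 1 from by omega]; exact Nat.mod_eq_of_lt (by omega)
        have e2 : (n - 2 + 2) % n = 0 := by
          rw [show n - 2 + 2 = n from by omega, Nat.mod_self]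
        rw [e1, e2]
        have w0 : w 0 = ((0 : ℝ), (0 : ℝ)) := by rw [wdef 0 (by omega)]; norm_num
        have wm : w (n - 2) = (((n - 2 : ℕ) : ℝ), ((n - 2 : ℕ) : ℝ) ^ 2) :=
          wdef (n - 2) (by omega)
        rw [w0, wapex, wm]
        simp [cross]
        have hb : (3 : ℝ) ≤ ((n - 2 : ℕ) : ℝ) := by
          have : 3 ≤ n - 2 := by omega
          exact_mod_cast this
        have hHpos : (0 : ℝ) < (H : ℝ) := by rw [hH]; push_cast; positivity
        nlinarith
      · -- generic: i + 2 ≤ n - 1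
        have hi2 : i + 1 ≤ n - 2 := by omega
        have e1 : (i + 1) % n = i + 1 := Nat.mod_eq_of_lt (by omega)
        have e2 : (i + 2) % n = i + 2 := Nat.mod_eq_of_lt (by omega)
        rw [e1, e2]
        have wi : w i = ((i : ℝ), (i : ℝ) ^ 2) := wdef i h1
        have wi1 : w (i + 1) = (((i : ℝ) + 1), ((i : ℝ) + 1) ^ 2) := by
          rw [wdef (i + 1) (by omega)]; push_cast; rfl
        rcases eq_or_ne (i + 2) (n - 1) with h3 | h3
        · -- next next is apex
          have wi2 : w (i + 2) = ((0 : ℝ), (H : ℝ)) := by rw [h3, wapex]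
          rw [wi, wi1, wi2]
          simp [cross]
          have hic : (i : ℝ) + 2 = ((n - 2 : ℕ) : ℝ) + 1 := by
            have : i + 2 = n - 1 := h3
            have : i = n - 3 := by omega
            subst this
            have h4 : (3:ℕ) ≤ n := by omega
            push_cast [Nat.cast_sub (by omega : 3 ≤ n), Nat.cast_sub (by omega : 2 ≤ n)]
            ring
          have hHc : ((H : ℕ) : ℝ) = ((n - 2 : ℕ) : ℝ) ^ 2 + 1 := by rw [hH]; push_cast; ring
          have hb : (3 : ℝ) ≤ ((n - 2 : ℕ) : ℝ) := by
            have : 3 ≤ n - 2 := by omega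
            exact_mod_cast this
          rw [hHc]
          nlinarith [hic]
        · -- all three on parabola
          have wi2 : w (i + 2) = (((i : ℝ) + 2), ((i : ℝ) + 2) ^ 2) := by
            rw [wdef (i + 2) h3]; push_cast; rfl
          rw [wi, wi1, wi2]
          simp [cross]
          ring_nf
          norm_num

end Stmt7Aux

theorem stmt7 (D : Set (ℝ × ℝ)) (hDcp : IsCompact D) (hDcv : Convex ℝ D)
    (hD0 : (0 : ℝ × ℝ) ∈ interior D)
    (hArea : (MeasureTheory.volume D).toReal = 1) :
    ∃ c : ℝ, 0 < c ∧ ∃ n₀ : ℕ, ∀ n : ℕ, n₀ ≤ n → c * (n : ℝ) ^ ((3 : ℝ) / 2) ≤ Ln D n := by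
  obtain ⟨M, hM0, hMnorm⟩ := Stmt7Aux.normD_ge D hDcp hD0
  refine ⟨1 / (12 * M), by positivity, 36, fun n hn => ?_⟩
  have hn0 : (0:ℝ) < (n:ℝ) := by exact_mod_cast (by omega : 0 < n)
  have hpow : (n : ℝ) ^ ((3:ℝ)/2) = (n:ℝ) * Real.sqrt n := by
    rw [show (3:ℝ)/2 = 1 + 1/2 by norm_num, Real.rpow_add hn0, Real.rpow_one,
      ← Real.sqrt_eq_rpow]
  rw [Ln]
  apply le_csInf
  · obtain ⟨z, hlat, hpoly⟩ := Stmt7Aux.exists_polygon n (by omega)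
    exact ⟨perD D n z, z, hlat, hpoly, rfl⟩
  · rintro p ⟨z, hlat, hpoly, rfl⟩
    rw [perD]
    set v : ℕ → ℝ × ℝ := fun i => z ((i+1)%n) - z i with hv
    have hlatv : ∀ i < n, ∃ a b : ℤ, v i = ((a:ℝ),(b:ℝ)) := by
      intro i hi
      obtain ⟨a, b, hab⟩ := hlat i hi
      obtain ⟨a', b', hab'⟩ := hlat ((i+1)%n) (Nat.mod_lt _ (by omega))
      refine ⟨a' - a, b' - b, ?_⟩
      rw [hv]
      simp only
      rw [hab, hab']
      push_cast
      rfl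
    have hmult : ∀ i j k : ℕ, i < j → j < k → k < n → v i = v j → v i = v k → False := by
      intro i j k hij hjk hk h1 h2
      exact Stmt7Aux.mult2 hpoly hij hjk hk h1 h2
    have hsum := Stmt7Aux.sum_norm_ge hn v hlatv hmult
    have hterm : ∀ i ∈ Finset.range n, ‖v i‖ / M ≤ normD D (z ((i+1)%n) - z i) :=
      fun i _ => hMnorm _
    calc 1/(12*M) * ((n:ℝ) ^ ((3:ℝ)/2)) = ((n:ℝ) * Real.sqrt n / 12) / M := by
          rw [hpow]; field_simp
      _ ≤ (∑ i ∈ Finset.range n, ‖v i‖) / M := by gcongr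
      _ = ∑ i ∈ Finset.range n, ‖v i‖ / M := Finset.sum_div _ _ _
      _ ≤ ∑ i ∈ Finset.range n, normD D (z ((i+1)%n) - z i) := Finset.sum_le_sum hterm
end

section
/- There exist constants C > 0 and n₀ such that for all n ≥ n₀, L_n ≤ C·n^{3/2}. -/
open Real Set
open scoped Pointwise

lemma normD_nonneg (D : Set (ℝ × ℝ)) (x : ℝ × ℝ) : 0 ≤ normD D x :=
  Real.sInf_nonneg (fun _ ht => ht.1)

lemma normD_le_of_interior {D : Set (ℝ × ℝ)} (hD0 : (0 : ℝ × ℝ) ∈ interior D) :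
    ∃ M : ℝ, 0 < M ∧ ∀ x : ℝ × ℝ, normD D x ≤ M * (|x.1| + |x.2|) := by
  obtain ⟨ε, hε, hball⟩ := Metric.mem_nhds_iff.mp (mem_interior_iff_mem_nhds.mp hD0)
  have hballD : Metric.ball (0 : ℝ × ℝ) ε ⊆ D := hball
  refine ⟨2 / ε, by positivity, fun x => ?_⟩
  have hxle : ‖x‖ ≤ |x.1| + |x.2| := by
    rw [Prod.norm_def]
    simp only [Real.norm_eq_abs]
    exact max_le (le_add_of_nonneg_right (abs_nonneg _)) (le_add_of_nonneg_left (abs_nonneg _))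
  rcases eq_or_ne x 0 with rfl | hx
  · have h0 : (0:ℝ) ∈ {t : ℝ | 0 ≤ t ∧ (0:ℝ×ℝ) ∈ t • D} := by
      refine ⟨le_refl 0, ?_⟩
      rw [zero_smul_set ⟨0, hballD (by simp [hε])⟩]
      exact rfl
    have : normD D 0 ≤ 0 := csInf_le ⟨0, fun t ht => ht.1⟩ h0
    simpa using this.trans (by positivity)
  · have hxnorm : 0 < ‖x‖ := norm_pos_iff.mpr hx
    set t : ℝ := 2 * ‖x‖ / ε with ht_def
    have ht : 0 < t := by positivity
    have hmem : x ∈ t • D := by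
      refine ⟨t⁻¹ • x, hballD ?_, by show t • t⁻¹ • x = x; rw [smul_smul, mul_inv_cancel₀ ht.ne', one_smul]⟩
      rw [mem_ball_zero_iff, norm_smul, norm_inv, Real.norm_eq_abs, abs_of_pos ht, ht_def]
      rw [inv_mul_eq_div, div_lt_iff₀ (by positivity)]
      have : ε * (2 * ‖x‖ / ε) = 2 * ‖x‖ := by field_simp
      rw [this]; nlinarith
    have h1 : normD D x ≤ t := csInf_le ⟨0, fun u hu => hu.1⟩ ⟨ht.le, hmem⟩
    calc normD D x ≤ t := h1
    _ = 2 / ε * ‖x‖ := by rw [ht_def]; ring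
    _ ≤ 2 / ε * (|x.1| + |x.2|) := by
      apply mul_le_mul_of_nonneg_left hxle (by positivity)

lemma sep_vertex {n : ℕ} {z : ℕ → ℝ × ℝ} {i : ℕ} (u : ℝ × ℝ)
    (h : ∀ j, j < n → j ≠ i → u.1 * (z j).1 + u.2 * (z j).2 < u.1 * (z i).1 + u.2 * (z i).2) :
    z i ∉ convexHull ℝ (z '' {j | j < n ∧ j ≠ i}) := by
  intro hmem
  set c := u.1 * (z i).1 + u.2 * (z i).2 with hc
  have hlin : IsLinearMap ℝ (fun x : ℝ × ℝ => u.1 * x.1 + u.2 * x.2) := by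
    constructor
    · intro a b; simp [Prod.fst_add, Prod.snd_add]; ring
    · intro t a; simp [Prod.smul_fst, Prod.smul_snd, smul_eq_mul]; ring
  have hconv : Convex ℝ {x : ℝ × ℝ | u.1 * x.1 + u.2 * x.2 < c} := convex_halfSpace_lt hlin c
  have hsub : convexHull ℝ (z '' {j | j < n ∧ j ≠ i}) ⊆ {x : ℝ × ℝ | u.1 * x.1 + u.2 * x.2 < c} := by
    apply convexHull_min _ hconv
    rintro _ ⟨j, ⟨hj, hne⟩, rfl⟩
    exact h j hj hne
  exact lt_irrefl c (hsub hmem)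

lemma sum_inv_sq_le (K : ℕ) : ∑ d ∈ Finset.Icc 2 K, (1 : ℝ) / (d : ℝ) ^ 2 ≤ 3 / 4 := by
  rcases le_or_gt K 1 with hK | hK
  · rw [Finset.Icc_eq_empty (by omega)]; norm_num
  · have main : ∀ K : ℕ, 2 ≤ K → ∑ d ∈ Finset.Icc 2 K, (1 : ℝ) / (d : ℝ) ^ 2 ≤ 3 / 4 - 1 / K := by
      intro K hK
      induction K, hK using Nat.le_induction with
      | base => norm_num
      | succ n hn ih =>
        rw [Finset.sum_Icc_succ_top (by omega)]
        have hn0 : (0:ℝ) < (n:ℝ) := by exact_mod_cast Nat.lt_of_lt_of_le (by norm_num) hn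
        have h1 : (1:ℝ) / ((n:ℝ)+1) ^ 2 ≤ 1 / (n:ℝ) - 1 / ((n:ℝ)+1) := by
          rw [div_sub_div _ _ (by positivity) (by positivity), div_le_div_iff₀ (by positivity) (by positivity)]
          ring_nf
          nlinarith
        push_cast
        push_cast at ih
        linarith
    have h2 := main K (by omega)
    have h3 : (0:ℝ) ≤ 1 / (K:ℝ) := by positivity
    linarith

lemma slopes_exist (K : ℕ) :
    ∃ Q : Finset ℚ, (∀ r ∈ Q, 0 < r ∧ r < 1 ∧ r.den ≤ K) ∧
      (K : ℝ) ^ 2 / 8 - 1 ≤ (Q.card : ℝ) := by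
  classical
  set square : Finset (ℕ × ℕ) := Finset.Ioc 0 K ×ˢ Finset.Ioc 0 K with hsq
  set Cop : Finset (ℕ × ℕ) := square.filter (fun x => Nat.Coprime x.1 x.2) with hC
  set N : Finset (ℕ × ℕ) := square.filter (fun x => ¬ Nat.Coprime x.1 x.2) with hN
  have hcard_split : Cop.card + N.card = K ^ 2 := by
    rw [hC, hN, Finset.card_filter_add_card_filter_not, hsq, Finset.card_product,
      Nat.card_Ioc]
    simp [sq]
  have hNsub : N ⊆ (Finset.Icc 2 K).biUnion
      (fun d => square.filter (fun x => d ∣ x.1 ∧ d ∣ x.2)) := by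
    intro x hx
    rw [hN, Finset.mem_filter] at hx
    obtain ⟨hxsq, hxnc⟩ := hx
    have hxsq' := hxsq
    rw [hsq, Finset.mem_product, Finset.mem_Ioc, Finset.mem_Ioc] at hxsq'
    refine Finset.mem_biUnion.mpr ⟨Nat.gcd x.1 x.2, ?_, ?_⟩
    · rw [Finset.mem_Icc]
      have hgcd0 : Nat.gcd x.1 x.2 ≠ 0 := fun h => by
        have := Nat.eq_zero_of_gcd_eq_zero_left h; omega
      have hgcd1 : Nat.gcd x.1 x.2 ≠ 1 := hxnc
      have hgle : Nat.gcd x.1 x.2 ≤ x.1 := Nat.gcd_le_left _ hxsq'.1.1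
      omega
    · rw [Finset.mem_filter]
      exact ⟨hxsq, Nat.gcd_dvd_left _ _, Nat.gcd_dvd_right _ _⟩
  have hfilter_card : ∀ d : ℕ, (square.filter (fun x => d ∣ x.1 ∧ d ∣ x.2)).card = (K / d) ^ 2 := by
    intro d
    rw [hsq, Finset.filter_product, Finset.card_product, Nat.Ioc_filter_dvd_card_eq_div]
    ring
  have hNcard : (N.card : ℝ) ≤ 3 / 4 * (K : ℝ) ^ 2 := by
    have h1 : N.card ≤ ∑ d ∈ Finset.Icc 2 K, (K / d) ^ 2 := by
      calc N.card ≤ ((Finset.Icc 2 K).biUnion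
          (fun d => square.filter (fun x => d ∣ x.1 ∧ d ∣ x.2))).card := Finset.card_le_card hNsub
      _ ≤ ∑ d ∈ Finset.Icc 2 K, (square.filter (fun x => d ∣ x.1 ∧ d ∣ x.2)).card :=
          Finset.card_biUnion_le
      _ = ∑ d ∈ Finset.Icc 2 K, (K / d) ^ 2 := by simp_rw [hfilter_card]
    calc (N.card : ℝ) ≤ ∑ d ∈ Finset.Icc 2 K, ((K / d : ℕ) : ℝ) ^ 2 := by exact_mod_cast h1
    _ ≤ ∑ d ∈ Finset.Icc 2 K, (K : ℝ) ^ 2 * (1 / (d : ℝ) ^ 2) := by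
        apply Finset.sum_le_sum
        intro d hd
        rw [Finset.mem_Icc] at hd
        have hd0 : (0:ℝ) < (d:ℝ) := by exact_mod_cast Nat.lt_of_lt_of_le (by norm_num) hd.1
        have hdiv : ((K / d : ℕ) : ℝ) ≤ (K : ℝ) / (d:ℝ) := Nat.cast_div_le
        have hnn : (0:ℝ) ≤ ((K / d : ℕ) : ℝ) := Nat.cast_nonneg _
        have h2 : ((K / d : ℕ) : ℝ) ^ 2 ≤ ((K:ℝ)/(d:ℝ)) ^ 2 := by nlinarith
        calc ((K / d : ℕ) : ℝ) ^ 2 ≤ ((K:ℝ)/(d:ℝ)) ^ 2 := h2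
        _ = (K:ℝ)^2 * (1 / (d:ℝ)^2) := by field_simp
    _ = (K:ℝ)^2 * ∑ d ∈ Finset.Icc 2 K, (1 / (d : ℝ) ^ 2) := by rw [Finset.mul_sum]
    _ ≤ (K:ℝ)^2 * (3/4) := mul_le_mul_of_nonneg_left (sum_inv_sq_le K) (by positivity)
    _ = 3/4 * (K:ℝ)^2 := by ring
  have hCcard : (K : ℝ) ^ 2 / 4 ≤ (Cop.card : ℝ) := by
    have h4 : (Cop.card : ℝ) + (N.card : ℝ) = (K:ℝ)^2 := by exact_mod_cast hcard_split
    linarith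
  set F : Finset (ℕ × ℕ) := Cop.filter (fun x => x.1 < x.2) with hF
  set F' : Finset (ℕ × ℕ) := Cop.filter (fun x => x.2 < x.1) with hF'
  have hmemC : ∀ x ∈ Cop, (0 < x.1 ∧ x.1 ≤ K) ∧ (0 < x.2 ∧ x.2 ≤ K) ∧ Nat.Coprime x.1 x.2 := by
    intro x hx
    rw [hC, Finset.mem_filter, hsq, Finset.mem_product, Finset.mem_Ioc, Finset.mem_Ioc] at hx
    exact ⟨hx.1.1, hx.1.2, hx.2⟩
  have hmemC' : ∀ x : ℕ × ℕ, (0 < x.1 ∧ x.1 ≤ K) ∧ (0 < x.2 ∧ x.2 ≤ K) ∧ Nat.Coprime x.1 x.2 → x ∈ Cop := by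
    intro x hx
    rw [hC, Finset.mem_filter, hsq, Finset.mem_product, Finset.mem_Ioc, Finset.mem_Ioc]
    exact ⟨⟨hx.1, hx.2.1⟩, hx.2.2⟩
  have hswap : F.card = F'.card := by
    apply Finset.card_bij (fun x _ => (x.2, x.1))
    · intro a ha
      rw [hF, Finset.mem_filter] at ha
      obtain ⟨h1, h2, h3⟩ := hmemC a ha.1
      rw [hF', Finset.mem_filter]
      exact ⟨hmemC' _ ⟨h2, h1, h3.symm⟩, ha.2⟩
    · intro a _ b _ hab
      exact Prod.ext (congrArg Prod.snd hab) (congrArg Prod.fst hab)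
    · intro b hb
      rw [hF', Finset.mem_filter] at hb
      obtain ⟨h1, h2, h3⟩ := hmemC b hb.1
      exact ⟨(b.2, b.1), by rw [hF, Finset.mem_filter]; exact ⟨hmemC' _ ⟨h2, h1, h3.symm⟩, hb.2⟩, rfl⟩
  have hdiag : (Cop.filter (fun x => ¬ x.1 < x.2)).card ≤ F'.card + 1 := by
    have hsub2 : Cop.filter (fun x => ¬ x.1 < x.2) ⊆ insert ((1:ℕ),(1:ℕ)) F' := by
      intro x hx
      rw [Finset.mem_filter] at hx
      rcases Nat.lt_or_ge x.2 x.1 with h | h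
      · exact Finset.mem_insert_of_mem (by rw [hF', Finset.mem_filter]; exact ⟨hx.1, h⟩)
      · have heq : x.1 = x.2 := by omega
        obtain ⟨_, _, hcop⟩ := hmemC x hx.1
        rw [heq] at hcop
        have hone : x.2 = 1 := by rwa [Nat.Coprime, Nat.gcd_self] at hcop
        have hx1 : x = ((1:ℕ),(1:ℕ)) := Prod.ext (by omega) hone
        rw [hx1]
        exact Finset.mem_insert_self _ _
    calc (Cop.filter (fun x => ¬ x.1 < x.2)).card ≤ (insert ((1:ℕ),(1:ℕ)) F').card :=
          Finset.card_le_card hsub2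
    _ ≤ F'.card + 1 := Finset.card_insert_le _ _
  have hFcard : (K:ℝ)^2/8 - 1 ≤ (F.card : ℝ) := by
    have h1 : F.card + (Cop.filter (fun x => ¬ x.1 < x.2)).card = Cop.card := by
      rw [hF, Finset.card_filter_add_card_filter_not]
    have h2 : Cop.card ≤ 2 * F.card + 1 := by omega
    have h3 : (Cop.card : ℝ) ≤ 2 * (F.card:ℝ) + 1 := by exact_mod_cast h2
    linarith
  -- now the image
  refine ⟨F.image (fun x => (x.1 : ℚ) / (x.2 : ℚ)), ?_, ?_⟩
  · intro r hr
    rw [Finset.mem_image] at hr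
    obtain ⟨x, hx, rfl⟩ := hr
    rw [hF, Finset.mem_filter] at hx
    obtain ⟨⟨hp, hpK⟩, ⟨hq, hqK⟩, hcop⟩ := hmemC x hx.1
    have hlt := hx.2
    have hq0 : (0:ℚ) < (x.2:ℚ) := by exact_mod_cast hq
    refine ⟨div_pos (by exact_mod_cast hp) hq0, ?_, ?_⟩
    · rw [div_lt_one hq0]; exact_mod_cast hlt
    · have hdvd : (((x.1:ℚ) / (x.2:ℚ)).den : ℤ) ∣ (x.2 : ℤ) := by
        have := Rat.den_dvd (x.1 : ℤ) (x.2 : ℤ)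
        rwa [Rat.divInt_eq_div, Int.cast_natCast, Int.cast_natCast] at this
      have h5 := Int.le_of_dvd (by exact_mod_cast hq) hdvd
      have h6 : ((x.1:ℚ) / (x.2:ℚ)).den ≤ x.2 := by exact_mod_cast h5
      exact h6.trans hqK
  · have hinj : Set.InjOn (fun x : ℕ × ℕ => (x.1 : ℚ) / (x.2 : ℚ)) F := by
      intro a ha b hb hab
      rw [Finset.mem_coe, hF, Finset.mem_filter] at ha hb
      obtain ⟨⟨hap, _⟩, ⟨haq, _⟩, hacop⟩ := hmemC a ha.1
      obtain ⟨⟨hbp, _⟩, ⟨hbq, _⟩, hbcop⟩ := hmemC b hb.1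
      simp only at hab
      have haq0 : ((a.2:ℚ)) ≠ 0 := by positivity
      have hbq0 : ((b.2:ℚ)) ≠ 0 := by positivity
      have hcrossq : (a.1 : ℚ) * b.2 = (b.1 : ℚ) * a.2 := by
        field_simp at hab
        linarith [hab]
      have hcross : a.1 * b.2 = b.1 * a.2 := by exact_mod_cast hcrossq
      have hd1 : a.2 ∣ b.2 := by
        have : a.2 ∣ a.1 * b.2 := ⟨b.1, by rw [hcross, Nat.mul_comm]⟩
        exact (Nat.Coprime.dvd_of_dvd_mul_left (Nat.coprime_comm.mp hacop) this)
      have hd2 : b.2 ∣ a.2 := by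
        have : b.2 ∣ b.1 * a.2 := ⟨a.1, by rw [← hcross, Nat.mul_comm]⟩
        exact (Nat.Coprime.dvd_of_dvd_mul_left (Nat.coprime_comm.mp hbcop) this)
      have heq2 : a.2 = b.2 := Nat.dvd_antisymm hd1 hd2
      have heq1 : a.1 = b.1 := by
        rw [heq2] at hcross
        exact Nat.eq_of_mul_eq_mul_right hbq hcross
      exact Prod.ext heq1 heq2
    rw [Finset.card_image_of_injOn hinj]
    exact hFcard

def phiL (u x : ℝ × ℝ) : ℝ := u.1 * x.1 + u.2 * x.2

lemma phiL_sum (u : ℝ × ℝ) (T : Finset ℕ) (f : ℕ → ℝ × ℝ) :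
    phiL u (∑ i ∈ T, f i) = ∑ i ∈ T, phiL u (f i) := by
  simp only [phiL, Prod.fst_sum, Prod.snd_sum, Finset.mul_sum]
  rw [← Finset.sum_add_distrib]

lemma poly_exists (D : Set (ℝ × ℝ)) (M : ℝ) (hM : 0 < M)
    (hMle : ∀ x : ℝ × ℝ, normD D x ≤ M * (|x.1| + |x.2|))
    (m K : ℕ) (hm : 2 ≤ m) (s : ℕ → ℚ)
    (hmono : ∀ i j : ℕ, i < j → j < m → s i < s j)
    (hr : ∀ i, i < m → 0 < s i ∧ s i < 1 ∧ (s i).den ≤ K) :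
    ∃ z : ℕ → ℝ × ℝ, (∀ i < m + 2, IsLatticePt (z i)) ∧ IsConvexPolygon (m + 2) z ∧
      perD D (m + 2) z ≤ M * (6 * m * K) := by
  classical
  set q : ℕ → ℝ := fun i => ((s i).den : ℝ) with hq_def
  set p : ℕ → ℝ := fun i => ((s i).num : ℝ) with hp_def
  set E : ℕ → ℝ × ℝ := fun i => (q i, p i) with hE_def
  set S : ℝ × ℝ := ∑ i ∈ Finset.range m, E i with hS_def
  set z : ℕ → ℝ × ℝ := fun k =>
    if k = m + 1 then S + (0, S.1) else ∑ i ∈ Finset.range (min k m), E i with hz_def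
  -- basic facts about p, q
  have hq1 : ∀ i, i < m → 1 ≤ q i := by
    intro i hi
    have := (hr i hi).1
    have hden : 1 ≤ (s i).den := (s i).pos
    show (1:ℝ) ≤ ((s i).den : ℝ)
    exact_mod_cast hden
  have hnum_lt_den : ∀ i, i < m → (s i).num + 1 ≤ ((s i).den : ℤ) := by
    intro i hi
    obtain ⟨h0, h1, _⟩ := hr i hi
    have hd : (0:ℚ) < ((s i).den : ℚ) := by exact_mod_cast (s i).pos
    have : ((s i).num : ℚ) < ((s i).den : ℚ) := by
      have hrep := Rat.num_div_den (s i)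
      rw [← hrep] at h1
      rw [div_lt_one hd] at h1
      exact h1
    have : (s i).num < ((s i).den : ℤ) := by exact_mod_cast this
    omega
  have hp1 : ∀ i, i < m → 1 ≤ p i := by
    intro i hi
    have := Rat.num_pos.mpr (hr i hi).1
    have h2 : 1 ≤ (s i).num := this
    show (1:ℝ) ≤ ((s i).num : ℝ)
    exact_mod_cast h2
  have hpq : ∀ i, i < m → p i + 1 ≤ q i := by
    intro i hi
    have h3 := hnum_lt_den i hi
    show ((s i).num : ℝ) + 1 ≤ ((s i).den : ℝ)
    exact_mod_cast h3
  have hqK : ∀ i, i < m → q i ≤ K := by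
    intro i hi
    show ((s i).den : ℝ) ≤ (K:ℝ)
    exact_mod_cast (hr i hi).2.2
  have hq0 : ∀ i, i < m → (0:ℝ) < q i := fun i hi => lt_of_lt_of_le one_pos (hq1 i hi)
  have hrep : ∀ i, i < m → ((s i : ℚ) : ℝ) = p i / q i := by
    intro i hi
    rw [Rat.cast_def]
  -- cross positivity between slopes
  have hcr : ∀ i j, i < m → j < m → s i < s j → 0 < q i * p j - p i * q j := by
    intro i j hi hj hij
    have h' : ((s i : ℚ) : ℝ) < ((s j : ℚ) : ℝ) := by exact_mod_cast hij
    rw [hrep i hi, hrep j hj, div_lt_div_iff₀ (hq0 i hi) (hq0 j hj)] at h'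
    nlinarith
  -- z values
  have hz_le : ∀ k, k ≤ m → z k = ∑ i ∈ Finset.range k, E i := by
    intro k hk
    rw [hz_def]
    simp only
    rw [if_neg (by omega), min_eq_left hk]
  have hz_top : z (m + 1) = S + (0, S.1) := by rw [hz_def]; simp
  have hz0 : z 0 = 0 := by rw [hz_le 0 (by omega)]; simp
  have hzm : z m = S := by rw [hz_le m le_rfl, hS_def]
  have hedge : ∀ k, k < m → z (k + 1) - z k = E k := by
    intro k hk
    rw [hz_le (k+1) (by omega), hz_le k (by omega), Finset.sum_range_succ]
    abel
  have hedge2 : z (m + 1) - z m = (0, S.1) := by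
    rw [hz_top, hzm]; abel
  have hedge3 : z 0 - z (m + 1) = (-S.1, -(S.2 + S.1)) := by
    rw [hz0, hz_top]
    have : (S + ((0:ℝ), S.1)) = (S.1 + 0, S.2 + S.1) := by
      ext <;> simp
    rw [this]
    ext <;> simp
  -- sums of coordinates
  have hS1 : S.1 = ∑ i ∈ Finset.range m, q i := by
    rw [hS_def, Prod.fst_sum]
  have hS2 : S.2 = ∑ i ∈ Finset.range m, p i := by
    rw [hS_def, Prod.snd_sum]
  have hS1m : (m : ℝ) ≤ S.1 := by
    rw [hS1]
    calc (m:ℝ) = ∑ _i ∈ Finset.range m, (1:ℝ) := by simp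
    _ ≤ ∑ i ∈ Finset.range m, q i :=
      Finset.sum_le_sum (fun i hi => hq1 i (Finset.mem_range.mp hi))
  have hS1pos : (0:ℝ) < S.1 := lt_of_lt_of_le (by exact_mod_cast hm.trans_lt' (by norm_num)) hS1m
  have hS2pos : (0:ℝ) < S.2 := by
    rw [hS2]
    apply Finset.sum_pos (fun i hi => lt_of_lt_of_le one_pos (hp1 i (Finset.mem_range.mp hi)))
    exact ⟨0, Finset.mem_range.mpr (by omega)⟩
  have hS1K : S.1 ≤ (m:ℝ) * K := by
    rw [hS1]
    calc ∑ i ∈ Finset.range m, q i ≤ ∑ _i ∈ Finset.range m, (K:ℝ) :=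
      Finset.sum_le_sum (fun i hi => hqK i (Finset.mem_range.mp hi))
    _ = (m:ℝ) * K := by simp [mul_comm]
  have hS2K : S.2 ≤ (m:ℝ) * K := by
    rw [hS2]
    calc ∑ i ∈ Finset.range m, p i ≤ ∑ i ∈ Finset.range m, q i :=
      Finset.sum_le_sum (fun i hi => by
        have := hpq i (Finset.mem_range.mp hi); linarith)
    _ ≤ (m:ℝ) * K := by rw [← hS1]; exact hS1K
  -- linear functional machinery
  have hφz : ∀ (u : ℝ × ℝ) (j : ℕ), j ≤ m → phiL u (z j) = ∑ i ∈ Finset.range j, phiL u (E i) := by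
    intro u j hj
    rw [hz_le j hj, phiL_sum]
  have sep_chain : ∀ (u : ℝ × ℝ) (v : ℕ), v ≤ m → u.2 < 0 →
      (∀ l, l < v → 0 < phiL u (E l)) → (∀ l, v ≤ l → l < m → phiL u (E l) < 0) →
      (∀ j, j < m + 2 → j ≠ v → phiL u (z j) < phiL u (z v)) := by
    intro u v hv hu2 hpos hneg j hj hne
    have hφtop' : phiL u (z (m + 1)) = phiL u (z m) + u.2 * S.1 := by
      rw [hz_top, hzm]
      show u.1 * (S + ((0:ℝ), S.1)).1 + u.2 * (S + ((0:ℝ), S.1)).2 = (u.1 * S.1 + u.2 * S.2) + u.2 * S.1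
      simp [Prod.fst_add, Prod.snd_add]
      ring
    have hmono_chain : ∀ j', j' ≤ m → j' ≠ v → phiL u (z j') < phiL u (z v) := by
      intro j' hj' hne'
      rcases Nat.lt_or_ge j' v with h | h
      · have hd : phiL u (z v) - phiL u (z j') = ∑ l ∈ Finset.Ico j' v, phiL u (E l) := by
          rw [hφz u v hv, hφz u j' hj', Finset.sum_Ico_eq_sub _ (le_of_lt h)]
        have hgt : 0 < ∑ l ∈ Finset.Ico j' v, phiL u (E l) := by
          apply Finset.sum_pos (fun l hl => hpos l (Finset.mem_Ico.mp hl).2)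
          exact ⟨j', Finset.mem_Ico.mpr ⟨le_refl _, h⟩⟩
        linarith
      · have hlt : v < j' := by omega
        have hd : phiL u (z j') - phiL u (z v) = ∑ l ∈ Finset.Ico v j', phiL u (E l) := by
          rw [hφz u j' hj', hφz u v hv, Finset.sum_Ico_eq_sub _ (le_of_lt hlt)]
        have hlt2 : ∑ l ∈ Finset.Ico v j', phiL u (E l) < 0 := by
          apply Finset.sum_neg (fun l hl => by
            have := Finset.mem_Ico.mp hl
            exact hneg l this.1 (lt_of_lt_of_le this.2 hj'))
          exact ⟨v, Finset.mem_Ico.mpr ⟨le_refl _, hlt⟩⟩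
        linarith
    rcases Nat.lt_or_ge j (m + 1) with h | h
    · exact hmono_chain j (by omega) hne
    · have hj' : j = m + 1 := by omega
      subst hj'
      have h2 : phiL u (z m) ≤ phiL u (z v) := by
        rcases Nat.eq_or_lt_of_le hv with h' | h'
        · rw [h']
        · exact le_of_lt (hmono_chain m le_rfl (by omega))
      have h3 : u.2 * S.1 < 0 := mul_neg_of_neg_of_pos hu2 hS1pos
      linarith
  have hφtop : ∀ u : ℝ × ℝ, phiL u (z (m + 1)) = phiL u (z m) + u.2 * S.1 := by
    intro u
    rw [hz_top, hzm]
    show u.1 * (S + ((0:ℝ), S.1)).1 + u.2 * (S + ((0:ℝ), S.1)).2 = (u.1 * S.1 + u.2 * S.2) + u.2 * S.1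
    simp [Prod.fst_add, Prod.snd_add]
    ring
  have hx1pos : ∀ j, 1 ≤ j → j < m + 2 → 0 < (z j).1 := by
    intro j h1 h2
    rcases Nat.lt_or_ge j (m + 1) with h | h
    · rw [hz_le j (by omega), Prod.fst_sum]
      apply Finset.sum_pos
      · intro l hl
        have hl' := Finset.mem_range.mp hl
        exact hq0 l (by omega)
      · exact ⟨0, Finset.mem_range.mpr (by omega)⟩
    · have hj' : j = m + 1 := by omega
      subst hj'
      rw [hz_top, Prod.fst_add]
      simpa using hS1pos
  have hvertex : ∀ i, i < m + 2 → z i ∉ convexHull ℝ (z '' {j | j < m + 2 ∧ j ≠ i}) := by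
    intro i hi
    have hcase : i = 0 ∨ (∃ t, i = t + 1 ∧ t + 2 ≤ m) ∨ i = m ∨ i = m + 1 := by
      rcases Nat.eq_zero_or_pos i with h | h
      · left; exact h
      · rcases Nat.lt_or_ge i m with h' | h'
        · right; left; exact ⟨i - 1, by omega, by omega⟩
        · right; right; omega
    rcases hcase with rfl | ⟨t, rfl, ht⟩ | hieq | hieq
    rotate_left 2
    · rw [hieq]
      -- i = m
      apply sep_vertex ((1 : ℝ), (-1 : ℝ))
      intro j hj hne
      have := sep_chain ((1 : ℝ), (-1 : ℝ)) m le_rfl (by norm_num)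
        (fun l hl => by
          show 0 < 1 * q l + (-1) * p l
          have := hpq l hl
          linarith)
        (fun l hl1 hl2 => absurd hl2 (by omega))
        j hj hne
      exact this
    · rw [hieq]
      -- i = m + 1
      apply sep_vertex ((-1 : ℝ), (1 : ℝ))
      intro j hj hne
      set u : ℝ × ℝ := ((-1 : ℝ), (1 : ℝ)) with hu_def
      have hjm : j ≤ m := by omega
      show phiL u (z j) < phiL u (z (m + 1))
      rw [hφtop u]
      have hdiff : phiL u (z m) - phiL u (z j) = ∑ l ∈ Finset.Ico j m, phiL u (E l) := by
        rw [hφz u m le_rfl, hφz u j hjm, Finset.sum_Ico_eq_sub _ hjm]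
      have hEl : ∀ l, l < m → phiL u (E l) ≥ 1 - q l := by
        intro l hl
        show -1 * q l + 1 * p l ≥ 1 - q l
        have := hp1 l hl
        linarith
      rcases Nat.eq_or_lt_of_le hjm with h | h
      · rw [h]
        have huS : u.2 * S.1 = S.1 := by rw [hu_def]; ring
        rw [huS]
        linarith
      · have hsum : ∑ l ∈ Finset.Ico j m, phiL u (E l) ≥
            ∑ l ∈ Finset.Ico j m, (1 - q l) := by
          apply Finset.sum_le_sum
          intro l hl
          exact hEl l (Finset.mem_Ico.mp hl).2
        have hqsub : ∑ l ∈ Finset.Ico j m, q l ≤ S.1 := by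
          rw [hS1]
          apply Finset.sum_le_sum_of_subset_of_nonneg
          · intro l hl
            rw [Finset.mem_range]
            exact (Finset.mem_Ico.mp hl).2
          · intro l hl _
            exact (hq0 l (Finset.mem_range.mp hl)).le
        have hcount : ∑ l ∈ Finset.Ico j m, (1 - q l) =
            ((m - j : ℕ) : ℝ) - ∑ l ∈ Finset.Ico j m, q l := by
          rw [Finset.sum_sub_distrib]
          congr 1
          rw [Finset.sum_const, Nat.card_Ico]
          simp
        have huS : u.2 * S.1 = S.1 := by rw [hu_def]; ring
        rw [huS]
        have hmj : (1:ℝ) ≤ ((m - j : ℕ) : ℝ) := by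
          have : 1 ≤ m - j := by omega
          exact_mod_cast this
        linarith
    · -- i = 0
      apply sep_vertex ((-1 : ℝ), (0 : ℝ))
      intro j hj hne
      show -1 * (z j).1 + 0 * (z j).2 < -1 * (z 0).1 + 0 * (z 0).2
      rw [hz0]
      have := hx1pos j (by omega) hj
      simp only [Prod.fst_zero, Prod.snd_zero]
      linarith
    · -- middle vertex t + 1
      set c : ℚ := (s t + s (t + 1)) / 2 with hc_def
      set u : ℝ × ℝ := (((c : ℚ) : ℝ), (-1 : ℝ)) with hu_def
      have hst : s t < s (t + 1) := hmono t (t + 1) (Nat.lt_succ_self t) (by omega)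
      have hcast : ((c : ℚ) : ℝ) = (((s t : ℚ) : ℝ) + ((s (t+1) : ℚ) : ℝ)) / 2 := by
        rw [hc_def]; push_cast; ring
      have hstR : ((s t : ℚ) : ℝ) < ((s (t+1) : ℚ) : ℝ) := by exact_mod_cast hst
      have hc1 : ((s t : ℚ) : ℝ) < ((c : ℚ) : ℝ) := by rw [hcast]; linarith
      have hc2 : ((c : ℚ) : ℝ) < ((s (t+1) : ℚ) : ℝ) := by rw [hcast]; linarith
      have key : ∀ l, l < m → phiL u (E l) = q l * (((c : ℚ) : ℝ) - ((s l : ℚ) : ℝ)) := by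
        intro l hl
        have hql : q l ≠ 0 := (hq0 l hl).ne'
        have hpl : p l = q l * ((s l : ℚ) : ℝ) := by
          rw [hrep l hl]
          field_simp
        show ((c : ℚ) : ℝ) * q l + (-1) * p l = q l * (((c : ℚ) : ℝ) - ((s l : ℚ) : ℝ))
        rw [hpl]; ring
      apply sep_vertex u
      intro j hj hne
      have := sep_chain u (t + 1) (by omega) (by rw [hu_def]; norm_num)
        (fun l hl => by
          rw [key l (by omega)]
          have hsl : ((s l : ℚ) : ℝ) ≤ ((s t : ℚ) : ℝ) := by
            rcases Nat.lt_or_ge l t with h | h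
            · exact_mod_cast le_of_lt (hmono l t h (by omega))
            · have : l = t := by omega
              rw [this]
          have := hq0 l (by omega)
          nlinarith)
        (fun l hl1 hl2 => by
          rw [key l hl2]
          have hsl : ((s (t+1) : ℚ) : ℝ) ≤ ((s l : ℚ) : ℝ) := by
            rcases Nat.eq_or_lt_of_le hl1 with h | h
            · rw [← h]
            · exact_mod_cast le_of_lt (hmono (t+1) l h hl2)
          have := hq0 l hl2
          nlinarith)
        j hj hne
      exact this
  -- cross conditions
  have hcross : ∀ i, i < m + 2 → 0 < cross (z ((i + 1) % (m + 2)) - z (i % (m + 2)))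
      (z ((i + 2) % (m + 2)) - z ((i + 1) % (m + 2))) := by
    intro i hi
    have him : i % (m + 2) = i := Nat.mod_eq_of_lt hi
    rcases (by omega : i + 1 < m ∨ i + 1 = m ∨ i = m ∨ i = m + 1) with h | h | h | h
    · have e1 : (i + 1) % (m + 2) = i + 1 := Nat.mod_eq_of_lt (by omega)
      have e2 : (i + 2) % (m + 2) = i + 2 := Nat.mod_eq_of_lt (by omega)
      rw [him, e1, e2, hedge i (by omega)]
      have h3 : z (i + 2) - z (i + 1) = E (i + 1) := hedge (i + 1) h
      rw [h3]
      show 0 < q i * p (i + 1) - p i * q (i + 1)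
      exact hcr i (i + 1) (by omega) h (hmono i (i + 1) (Nat.lt_succ_self i) h)
    · have e1 : (i + 1) % (m + 2) = i + 1 := Nat.mod_eq_of_lt (by omega)
      have e2 : (i + 2) % (m + 2) = i + 2 := Nat.mod_eq_of_lt (by omega)
      rw [him, e1, e2, hedge i (by omega)]
      have h2 : i + 2 = m + 1 := by omega
      have h1 : i + 1 = m := h
      rw [h2, h1, hedge2]
      show 0 < q i * S.1 - p i * 0
      have := hq0 i (by omega)
      nlinarith [hS1pos]
    · rw [him, h]
      have e1 : (m + 1) % (m + 2) = m + 1 := Nat.mod_eq_of_lt (by omega)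
      have e2 : (m + 1 + 1) % (m + 2) = 0 := by
        have : m + 1 + 1 = m + 2 := rfl
        rw [this, Nat.mod_self]
      rw [e1, e2, hedge2, hedge3]
      show 0 < 0 * (-(S.2 + S.1)) - S.1 * (-S.1)
      nlinarith [hS1pos]
    · rw [him, h]
      have e1 : (m + 1 + 1) % (m + 2) = 0 := by
        have h4 : m + 1 + 1 = m + 2 := rfl
        rw [h4, Nat.mod_self]
      have e2 : (m + 1 + 2) % (m + 2) = 1 := by
        have h4 : m + 1 + 2 = (m + 2) + 1 := by omega
        rw [h4, Nat.add_mod_left]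
        exact Nat.mod_eq_of_lt (by omega)
      rw [e1, e2, hedge3]
      have h3 : z 1 - z 0 = E 0 := hedge 0 (by omega)
      rw [h3]
      show 0 < (-S.1) * p 0 - (-(S.2 + S.1)) * q 0
      nlinarith [hpq 0 (by omega), hq0 0 (by omega), hS1pos, hS2pos, hp1 0 (by omega)]
  -- lattice points
  have hsum_lattice : ∀ k, k ≤ m → IsLatticePt (∑ i ∈ Finset.range k, E i) := by
    intro k hk
    refine ⟨∑ i ∈ Finset.range k, ((s i).den : ℤ), ∑ i ∈ Finset.range k, (s i).num, ?_⟩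
    apply Prod.ext
    · rw [Prod.fst_sum]
      push_cast
      rfl
    · rw [Prod.snd_sum]
      push_cast
      rfl
  have hlattice : ∀ i, i < m + 2 → IsLatticePt (z i) := by
    intro i hi
    rcases Nat.lt_or_ge i (m + 1) with h | h
    · rw [hz_le i (by omega)]
      exact hsum_lattice i (by omega)
    · have h' : i = m + 1 := by omega
      subst h'
      rw [hz_top]
      obtain ⟨a, b, hab⟩ := hsum_lattice m le_rfl
      refine ⟨a, b + a, ?_⟩
      have hS1' : S.1 = (a : ℝ) := by rw [hS_def, hab]
      have hS2' : S.2 = (b : ℝ) := by rw [hS_def, hab]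
      apply Prod.ext
      · show S.1 + 0 = ((a : ℤ) : ℝ)
        rw [hS1']
        ring
      · show S.2 + S.1 = ((b + a : ℤ) : ℝ)
        rw [hS1', hS2']
        push_cast
        ring
  -- perimeter bound
  have hper : perD D (m + 2) z ≤ M * (6 * m * K) := by
    rw [perD, Finset.sum_range_succ, Finset.sum_range_succ]
    have e1 : (m + 1) % (m + 2) = m + 1 := Nat.mod_eq_of_lt (by omega)
    have e2 : (m + 1 + 1) % (m + 2) = 0 := by
      have h4 : m + 1 + 1 = m + 2 := rfl
      rw [h4, Nat.mod_self]
    rw [e1, e2, hedge2, hedge3]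
    have hterm1 : ∑ i ∈ Finset.range m, normD D (z ((i + 1) % (m + 2)) - z i) ≤
        (m : ℝ) * (M * (2 * K)) := by
      calc ∑ i ∈ Finset.range m, normD D (z ((i + 1) % (m + 2)) - z i) ≤
          ∑ _i ∈ Finset.range m, M * (2 * (K:ℝ)) := by
            apply Finset.sum_le_sum
            intro i hi
            have hi' := Finset.mem_range.mp hi
            have e3 : (i + 1) % (m + 2) = i + 1 := Nat.mod_eq_of_lt (by omega)
            rw [e3, hedge i hi']
            calc normD D (E i) ≤ M * (|(E i).1| + |(E i).2|) := hMle _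
            _ = M * (q i + p i) := by
                show M * (|q i| + |p i|) = M * (q i + p i)
                rw [abs_of_pos (hq0 i hi'), abs_of_pos (lt_of_lt_of_le one_pos (hp1 i hi'))]
            _ ≤ M * (2 * (K:ℝ)) := by
                have h5 := hqK i hi'
                have h6 := hpq i hi'
                have h7 := hq1 i hi'
                apply mul_le_mul_of_nonneg_left _ hM.le
                linarith
      _ = (m : ℝ) * (M * (2 * K)) := by
          rw [Finset.sum_const, Finset.card_range]
          simp
    have hterm2 : normD D ((0 : ℝ), S.1) ≤ M * ((m : ℝ) * K) := by
      calc normD D ((0:ℝ), S.1) ≤ M * (|(0:ℝ)| + |S.1|) := hMle _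
      _ = M * S.1 := by rw [abs_zero, abs_of_pos hS1pos]; ring
      _ ≤ M * ((m:ℝ) * K) := mul_le_mul_of_nonneg_left hS1K hM.le
    have hterm3 : normD D (-S.1, -(S.2 + S.1)) ≤ M * (3 * (m : ℝ) * K) := by
      calc normD D (-S.1, -(S.2 + S.1)) ≤ M * (|-S.1| + |-(S.2 + S.1)|) := hMle _
      _ = M * (S.1 + (S.2 + S.1)) := by
          rw [abs_neg, abs_neg, abs_of_pos hS1pos, abs_of_pos (by linarith)]
      _ ≤ M * (3 * (m:ℝ) * K) := by
          apply mul_le_mul_of_nonneg_left _ hM.le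
          linarith
    have heq : (m : ℝ) * (M * (2 * K)) + M * ((m : ℝ) * K) + M * (3 * (m : ℝ) * K)
        = M * (6 * m * K) := by ring
    linarith
  exact ⟨z, hlattice, ⟨hvertex, hcross⟩, hper⟩

theorem stmt8 (D : Set (ℝ × ℝ)) (hDcp : IsCompact D) (hDcv : Convex ℝ D)
    (hD0 : (0 : ℝ × ℝ) ∈ interior D)
    (hArea : (MeasureTheory.volume D).toReal = 1) :
    ∃ C : ℝ, 0 < C ∧ ∃ n₀ : ℕ, ∀ n : ℕ, n₀ ≤ n → Ln D n ≤ C * (n : ℝ) ^ ((3 : ℝ) / 2) := by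
  obtain ⟨M, hM, hMle⟩ := normD_le_of_interior hD0
  refine ⟨36 * M, by positivity, 4, ?_⟩
  intro n hn
  set m := n - 2 with hm_def
  have hnm : n = m + 2 := by omega
  set K := 3 * Nat.sqrt n + 3 with hK_def
  obtain ⟨Q, hQmem, hQcard⟩ := slopes_exist K
  have hn4 : (4:ℝ) ≤ (n:ℝ) := by exact_mod_cast hn
  have hsqrt : (n : ℝ) < ((Nat.sqrt n : ℝ) + 1) * ((Nat.sqrt n : ℝ) + 1) := by
    have := Nat.lt_succ_sqrt n
    exact_mod_cast this
  have hKr : (K : ℝ) = 3 * ((Nat.sqrt n : ℝ) + 1) := by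
    rw [hK_def]; push_cast; ring
  have hK2 : 9 * (n:ℝ) ≤ (K:ℝ)^2 := by
    rw [hKr]; nlinarith
  have hmr : (m:ℝ) = (n:ℝ) - 2 := by
    have : (n:ℝ) = (m:ℝ) + 2 := by exact_mod_cast hnm
    linarith
  have hcard : (m:ℝ) ≤ (Q.card:ℝ) := by
    rw [hmr]; nlinarith
  have hmQ : m ≤ Q.card := by exact_mod_cast hcard
  obtain ⟨T, hTsub, hTcard⟩ := Finset.exists_subset_card_eq (s := Q) (n := m) hmQ
  set l := Finset.sort T (· ≤ ·) with hl_def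
  have hlen : l.length = m := by rw [hl_def, Finset.length_sort, hTcard]
  set s : ℕ → ℚ := fun i => l.getD i 0 with hs_def
  have hmono : ∀ i j : ℕ, i < j → j < m → s i < s j := by
    intro i j hij hj
    have hi' : i < l.length := by omega
    have hj' : j < l.length := by omega
    have hlt : l.get ⟨i, hi'⟩ < l.get ⟨j, hj'⟩ :=
      (Finset.sortedLT_sort T).strictMono_get (show (⟨i, hi'⟩ : Fin l.length) < ⟨j, hj'⟩ from hij)
    show l.getD i 0 < l.getD j 0
    rw [List.getD_eq_getElem l 0 hi', List.getD_eq_getElem l 0 hj']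
    exact hlt
  have hrprop : ∀ i, i < m → 0 < s i ∧ s i < 1 ∧ (s i).den ≤ K := by
    intro i hi
    have hi' : i < l.length := by omega
    have hmem : s i ∈ T := by
      show l.getD i 0 ∈ T
      rw [List.getD_eq_getElem l 0 hi']
      have hmem' : l[i] ∈ l := List.getElem_mem _
      exact (Finset.mem_sort (α := ℚ) (· ≤ ·)).mp hmem'
    exact hQmem _ (hTsub hmem)
  obtain ⟨z, hzl, hzc, hzp⟩ := poly_exists D M hM hMle m K (by omega) s hmono hrprop
  have hLn : Ln D n ≤ perD D n z := by
    apply csInf_le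
    · refine ⟨0, fun x hx => ?_⟩
      obtain ⟨z', _, _, rfl⟩ := hx
      exact Finset.sum_nonneg (fun i _ => normD_nonneg D _)
    · exact ⟨z, by rw [hnm]; exact hzl, by rw [hnm]; exact hzc, rfl⟩
  have hsqle : (Nat.sqrt n : ℝ) ≤ Real.sqrt n := by
    rw [show ((Nat.sqrt n : ℕ) : ℝ) = Real.sqrt (((Nat.sqrt n : ℕ) : ℝ)^2) from
      (Real.sqrt_sq (Nat.cast_nonneg _)).symm]
    apply Real.sqrt_le_sqrt
    have := Nat.sqrt_le' n
    exact_mod_cast this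
  have hsq1 : (1:ℝ) ≤ Real.sqrt n := by
    rw [show (1:ℝ) = Real.sqrt 1 from (Real.sqrt_one).symm]
    apply Real.sqrt_le_sqrt
    linarith
  have hKle : (K:ℝ) ≤ 6 * Real.sqrt n := by
    rw [hKr]
    linarith
  have hrpow : (n:ℝ) ^ ((3:ℝ)/2) = (n:ℝ) * Real.sqrt n := by
    rw [show (3:ℝ)/2 = 1 + 1/2 by norm_num, Real.rpow_add (by linarith) 1 (1/2),
      Real.rpow_one, ← Real.sqrt_eq_rpow]
  have hfinal : M * (6 * m * K) ≤ 36 * M * ((n:ℝ) ^ ((3:ℝ)/2)) := by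
    rw [hrpow]
    have hm_le : (m:ℝ) ≤ (n:ℝ) := by rw [hmr]; linarith
    have hK0 : (0:ℝ) ≤ (K:ℝ) := Nat.cast_nonneg _
    have hm0 : (0:ℝ) ≤ (m:ℝ) := Nat.cast_nonneg _
    have h1 : (m:ℝ) * (K:ℝ) ≤ (n:ℝ) * (6 * Real.sqrt n) := by
      apply mul_le_mul hm_le hKle hK0 (by linarith)
    nlinarith
  have hz' : perD D n z ≤ M * (6 * m * K) := by rw [hnm]; exact hzp
  calc Ln D n ≤ perD D n z := hLn
  _ ≤ M * (6 * m * K) := hz'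
  _ ≤ 36 * M * ((n:ℝ) ^ ((3:ℝ)/2)) := hfinal
end

section
/- Let M_n(w) be the minimum of Σ_{v∈S} |v| over all sets S of n distinct nonzero lattice points contained in a strip of width w centred at the origin (|·| the Euclidean norm). There is a constant c > 0 such that for every γ ∈ (0, 1/2] and all sufficiently large n: if w ≤ γ·n^{1/2} then M_n(w) ≥ c·n^{3/2}/γ. -/
open Real Set

/-- The Euclidean norm on the plane `ℝ × ℝ`. -/
noncomputable def eN (p : ℝ × ℝ) : ℝ := Real.sqrt (p.1 ^ 2 + p.2 ^ 2)

def toR2 (p : ℤ × ℤ) : ℝ × ℝ := ((p.1 : ℝ), (p.2 : ℝ))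

/-- `S` lies in a strip of width `w` centred at the origin, i.e. within Euclidean
distance `w/2` of some line through the origin. -/
def InStrip (S : Finset (ℤ × ℤ)) (w : ℝ) : Prop :=
  ∃ u : ℝ × ℝ, eN u = 1 ∧ ∀ p ∈ S, |cross u (toR2 p)| ≤ w / 2

noncomputable def dotp (u v : ℝ × ℝ) : ℝ := u.1 * v.1 + u.2 * v.2

lemma eN_nonneg (p : ℝ × ℝ) : 0 ≤ eN p := Real.sqrt_nonneg _

lemma eN_sq (p : ℝ × ℝ) : eN p ^ 2 = p.1 ^ 2 + p.2 ^ 2 := Real.sq_sqrt (by positivity)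

lemma floor_eq_abs_lt {a b : ℝ} (h : ⌊a⌋ = ⌊b⌋) : |a - b| < 1 := by
  have h1 := Int.floor_le a
  have h2 := Int.lt_floor_add_one a
  have h3 := Int.floor_le b
  have h4 := Int.lt_floor_add_one b
  rw [h] at h1 h2
  rw [abs_sub_lt_iff]
  constructor <;> push_cast at * <;> linarith

lemma count_lemma (u : ℝ × ℝ) (hu : eN u = 1) (S : Finset (ℤ × ℤ)) (w R : ℝ)
    (hw : 0 ≤ w) (hR : 0 ≤ R)
    (hstrip : ∀ p ∈ S, |cross u (toR2 p)| ≤ w / 2)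
    (hnorm : ∀ p ∈ S, eN (toR2 p) ≤ R) :
    (S.card : ℝ) ≤ 12 * (R + 1) * (w + 1) := by
  have hu2 : u.1 ^ 2 + u.2 ^ 2 = 1 := by
    have h := eN_sq u; rw [hu] at h; nlinarith
  have hcard : S.card ≤ ((Finset.Icc (-⌈2*R⌉) ⌈2*R⌉) ×ˢ (Finset.Icc (-⌈w⌉) ⌈w⌉)).card := by
    apply Finset.card_le_card_of_injOn
      (fun p => (⌊2 * dotp u (toR2 p)⌋, ⌊2 * cross u (toR2 p)⌋))
    · intro p hp
      have hc : |cross u (toR2 p)| ≤ w / 2 := hstrip p hp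
      have hd : |dotp u (toR2 p)| ≤ R := by
        have hid : dotp u (toR2 p) ^ 2 + cross u (toR2 p) ^ 2 = eN (toR2 p) ^ 2 := by
          rw [eN_sq]; simp only [dotp, cross]; nlinarith
        have h1 : dotp u (toR2 p) ^ 2 ≤ R ^ 2 := by
          have h2 := hnorm p hp
          have h3 := eN_nonneg (toR2 p)
          nlinarith [sq_nonneg (cross u (toR2 p))]
        rw [← Real.sqrt_sq_eq_abs]
        calc Real.sqrt (dotp u (toR2 p) ^ 2) ≤ Real.sqrt (R ^ 2) := Real.sqrt_le_sqrt h1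
          _ = R := Real.sqrt_sq hR
      rw [abs_le] at hc hd
      simp only [Finset.mem_coe, Finset.mem_product, Finset.mem_Icc]
      refine ⟨⟨?_, ?_⟩, ?_, ?_⟩
      · rw [show -⌈2*R⌉ = ⌊-(2*R)⌋ by rw [Int.floor_neg]]
        exact Int.floor_le_floor (by linarith)
      · exact le_trans (Int.floor_le_floor (by linarith)) (Int.floor_le_ceil _)
      · rw [show -⌈w⌉ = ⌊-w⌋ by rw [Int.floor_neg]]
        exact Int.floor_le_floor (by linarith)
      · exact le_trans (Int.floor_le_floor (by linarith)) (Int.floor_le_ceil _)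
    · intro p hp q hq hpq
      simp only [Prod.mk.injEq] at hpq
      by_contra hne
      have h1 : |2 * dotp u (toR2 p) - 2 * dotp u (toR2 q)| < 1 := floor_eq_abs_lt hpq.1
      have h2 : |2 * cross u (toR2 p) - 2 * cross u (toR2 q)| < 1 := floor_eq_abs_lt hpq.2
      rw [abs_sub_lt_iff] at h1 h2
      have hsep : (1 : ℝ) ≤ ((p.1 : ℝ) - q.1) ^ 2 + ((p.2 : ℝ) - q.2) ^ 2 := by
        have : p.1 ≠ q.1 ∨ p.2 ≠ q.2 := by
          by_contra hc; push_neg at hc; exact hne (Prod.ext hc.1 hc.2)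
        rcases this with h | h
        · have h3 : (1 : ℤ) ≤ |p.1 - q.1| := Int.one_le_abs (sub_ne_zero.mpr h)
          have h4 : (1 : ℝ) ≤ |(p.1 : ℝ) - q.1| := by
            have h5 : (1 : ℝ) ≤ |((p.1 - q.1 : ℤ) : ℝ)| := by
              rw [← Int.cast_abs]; exact_mod_cast h3
            push_cast at h5; linarith
          nlinarith [sq_nonneg ((p.2 : ℝ) - q.2), abs_nonneg ((p.1:ℝ) - q.1), sq_abs ((p.1:ℝ) - q.1)]
        · have h3 : (1 : ℤ) ≤ |p.2 - q.2| := Int.one_le_abs (sub_ne_zero.mpr h)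
          have h4 : (1 : ℝ) ≤ |(p.2 : ℝ) - q.2| := by
            have h5 : (1 : ℝ) ≤ |((p.2 - q.2 : ℤ) : ℝ)| := by
              rw [← Int.cast_abs]; exact_mod_cast h3
            push_cast at h5; linarith
          nlinarith [sq_nonneg ((p.1 : ℝ) - q.1), abs_nonneg ((p.2:ℝ) - q.2), sq_abs ((p.2:ℝ) - q.2)]
      simp only [dotp, cross, toR2] at h1 h2
      nlinarith [h1.1, h1.2, h2.1, h2.2, sq_nonneg (u.1 * ((p.1:ℝ) - q.1) + u.2 * ((p.2:ℝ) - q.2)),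
        sq_nonneg (u.1 * ((p.2:ℝ) - q.2) - u.2 * ((p.1:ℝ) - q.1))]
  have hA : (0 : ℤ) ≤ ⌈2*R⌉ := Int.ceil_nonneg (by linarith)
  have hB : (0 : ℤ) ≤ ⌈w⌉ := Int.ceil_nonneg hw
  have hAc : ((⌈2*R⌉ : ℤ) : ℝ) ≤ 2*R + 1 := le_of_lt (Int.ceil_lt_add_one _)
  have hBc : ((⌈w⌉ : ℤ) : ℝ) ≤ w + 1 := le_of_lt (Int.ceil_lt_add_one _)
  have hprod : (((Finset.Icc (-⌈2*R⌉) ⌈2*R⌉) ×ˢ (Finset.Icc (-⌈w⌉) ⌈w⌉)).card : ℝ)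
      = (2 * (⌈2*R⌉ : ℝ) + 1) * (2 * (⌈w⌉ : ℝ) + 1) := by
    have hA1 : (((⌈2*R⌉ + 1 - -⌈2*R⌉).toNat : ℕ) : ℝ) = 2 * (⌈2*R⌉ : ℝ) + 1 := by
      rw [show (((⌈2*R⌉ + 1 - -⌈2*R⌉).toNat : ℕ) : ℝ) = (((⌈2*R⌉ + 1 - -⌈2*R⌉).toNat : ℤ) : ℝ) by
        push_cast; ring, Int.toNat_of_nonneg (by omega)]
      push_cast; ring
    have hB1 : (((⌈w⌉ + 1 - -⌈w⌉).toNat : ℕ) : ℝ) = 2 * (⌈w⌉ : ℝ) + 1 := by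
      rw [show (((⌈w⌉ + 1 - -⌈w⌉).toNat : ℕ) : ℝ) = (((⌈w⌉ + 1 - -⌈w⌉).toNat : ℤ) : ℝ) by
        push_cast; ring, Int.toNat_of_nonneg (by omega)]
      push_cast; ring
    rw [Finset.card_product, Int.card_Icc, Int.card_Icc, Nat.cast_mul, hA1, hB1]
  calc (S.card : ℝ) ≤ (((Finset.Icc (-⌈2*R⌉) ⌈2*R⌉) ×ˢ (Finset.Icc (-⌈w⌉) ⌈w⌉)).card : ℝ) := by
        exact_mod_cast hcard
    _ = (2 * (⌈2*R⌉ : ℝ) + 1) * (2 * (⌈w⌉ : ℝ) + 1) := hprod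
    _ ≤ 12 * (R + 1) * (w + 1) := by
        have h0A : (0:ℝ) ≤ (⌈2*R⌉ : ℝ) := by exact_mod_cast hA
        have h0B : (0:ℝ) ≤ (⌈w⌉ : ℝ) := by exact_mod_cast hB
        nlinarith

theorem stmt10 :
    ∃ c : ℝ, 0 < c ∧ ∀ γ : ℝ, 0 < γ → γ ≤ 1 / 2 → ∃ n₀ : ℕ, ∀ n : ℕ, n₀ ≤ n →
      ∀ w : ℝ, ∀ S : Finset (ℤ × ℤ), S.card = n → (0 : ℤ × ℤ) ∉ S → InStrip S w →
        w ≤ γ * (n : ℝ) ^ ((1 : ℝ) / 2) →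
        c * (n : ℝ) ^ ((3 : ℝ) / 2) / γ ≤ ∑ p ∈ S, eN (toR2 p) := by
  refine ⟨1/192, by norm_num, fun γ hγ hγ2 => ⟨2304 + ⌈γ⁻¹ ^ 2⌉₊, fun n hn w S hcard h0 hstrip hw => ?_⟩⟩
  obtain ⟨u, hu, hmem⟩ := hstrip
  have hn1 : (2304 : ℝ) ≤ (n : ℝ) := by
    have : (2304 : ℕ) ≤ n := le_trans (by omega) hn
    exact_mod_cast this
  have hn2 : γ⁻¹ ^ 2 ≤ (n : ℝ) := by
    have h1 : (⌈γ⁻¹ ^ 2⌉₊ : ℕ) ≤ n := le_trans (by omega) hn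
    calc γ⁻¹ ^ 2 ≤ (⌈γ⁻¹ ^ 2⌉₊ : ℝ) := Nat.le_ceil _
      _ ≤ (n : ℝ) := by exact_mod_cast h1
  set s := Real.sqrt (n : ℝ) with hs
  have hss : s * s = (n : ℝ) := Real.mul_self_sqrt (by positivity)
  have hs48 : (48 : ℝ) ≤ s := by
    rw [show (48 : ℝ) = Real.sqrt 2304 by
      rw [show (2304 : ℝ) = 48 ^ 2 by norm_num, Real.sqrt_sq]; norm_num]
    exact Real.sqrt_le_sqrt hn1
  have hγs : 1 ≤ γ * s := by
    have h1 : γ⁻¹ ≤ s := by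
      rw [show γ⁻¹ = Real.sqrt (γ⁻¹ ^ 2) by rw [Real.sqrt_sq (by positivity)]]
      exact Real.sqrt_le_sqrt hn2
    calc (1 : ℝ) = γ * γ⁻¹ := by field_simp
      _ ≤ γ * s := by apply mul_le_mul_of_nonneg_left h1 (le_of_lt hγ)
  have hrphalf : (n : ℝ) ^ ((1 : ℝ) / 2) = s := (Real.sqrt_eq_rpow _).symm
  have hrp32 : (n : ℝ) ^ ((3 : ℝ) / 2) = (n : ℝ) * s := by
    rw [show (3 : ℝ)/2 = 1 + 1/2 by norm_num, Real.rpow_add (by positivity), Real.rpow_one, hrphalf]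
  rw [hrphalf] at hw
  -- w is nonnegative
  have hSne : S.Nonempty := Finset.card_pos.mp (by omega)
  have hw0 : 0 ≤ w := by
    obtain ⟨p, hp⟩ := hSne
    have := hmem p hp
    have := abs_nonneg (cross u (toR2 p))
    linarith
  set W := w + 1 with hW
  have hWpos : (0 : ℝ) < W := by positivity
  have hWle : W ≤ 2 * γ * s := by
    have : (1:ℝ) ≤ γ * s := hγs
    simp only [hW]; linarith
  set R := (n : ℝ) / (24 * W) - 1 with hR
  have hR1 : R + 1 = (n : ℝ) / (24 * W) := by ring
  have hspos : (0 : ℝ) < s := by linarith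
  have hRge : s / (96 * γ) ≤ R := by
    have h1 : (n : ℝ) / (24 * (2 * γ * s)) ≤ (n : ℝ) / (24 * W) := by
      apply div_le_div_of_nonneg_left (by positivity) (by positivity)
      nlinarith
    have h2 : (n : ℝ) / (24 * (2 * γ * s)) = s / (48 * γ) := by
      rw [← hss]; field_simp; ring
    have h3 : s / (96 * γ) + 1 ≤ s / (48 * γ) := by
      have h4 : (1:ℝ) ≤ s / (96 * γ) := by
        rw [le_div_iff₀ (by positivity)]
        nlinarith
      have h5 : s / (48 * γ) = s / (96 * γ) + s / (96 * γ) := by field_simp; ring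
      linarith
    have := h2 ▸ h1
    simp only [hR]
    linarith
  have hR0 : 0 ≤ R := le_trans (by positivity) hRge
  -- counting
  set T := S.filter (fun p => eN (toR2 p) ≤ R) with hT
  have hTcount : (T.card : ℝ) ≤ 12 * (R + 1) * (w + 1) := by
    apply count_lemma u hu T w R hw0 hR0
    · exact fun p hp => hmem p (Finset.mem_of_mem_filter p hp)
    · exact fun p hp => (Finset.mem_filter.mp hp).2
  have hTval : 12 * (R + 1) * (w + 1) = (n : ℝ) / 2 := by
    rw [hR1, ← hW]; field_simp; ring
  set T' := S.filter (fun p => ¬ eN (toR2 p) ≤ R) with hT'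
  have hsplit : T.card + T'.card = n := by
    rw [hT, hT', Finset.card_filter_add_card_filter_not, hcard]
  have hT'card : (n : ℝ) / 2 ≤ (T'.card : ℝ) := by
    have : (T.card : ℝ) + (T'.card : ℝ) = (n : ℝ) := by exact_mod_cast hsplit
    linarith [hTval ▸ hTcount]
  have hsum1 : (T'.card : ℝ) * R ≤ ∑ p ∈ T', eN (toR2 p) := by
    have := Finset.card_nsmul_le_sum T' (fun p => eN (toR2 p)) R
      (fun p hp => le_of_lt (not_le.mp (Finset.mem_filter.mp hp).2))
    simpa [nsmul_eq_mul] using this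
  have hsum2 : ∑ p ∈ T', eN (toR2 p) ≤ ∑ p ∈ S, eN (toR2 p) :=
    Finset.sum_le_sum_of_subset_of_nonneg (Finset.filter_subset _ _)
      (fun p _ _ => eN_nonneg _)
  rw [hrp32]
  calc 1/192 * ((n:ℝ) * s) / γ = (n:ℝ)/2 * (s / (96 * γ)) := by field_simp; ring
    _ ≤ (n:ℝ)/2 * R := by
        apply mul_le_mul_of_nonneg_left hRge (by positivity)
    _ ≤ (T'.card : ℝ) * R := mul_le_mul_of_nonneg_right hT'card hR0
    _ ≤ ∑ p ∈ T', eN (toR2 p) := hsum1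
    _ ≤ ∑ p ∈ S, eN (toR2 p) := hsum2
end

section
/- Let r₀ be a positive continuous function on [0,2π] with r₀(0) = r₀(2π) such that (1/2)∫₀^{2π} r₀²(t) dt = 1, ∫₀^{2π} r₀³(t) cos t dt = 0 and ∫₀^{2π} r₀³(t) sin t dt = 0. Then for every positive continuous function r on [0,2π] with (1/2)∫₀^{2π} r²(t) dt = 1, one has ∫₀^{2π} r³(t)/r₀(t) dt ≥ ∫₀^{2π} r₀²(t) dt = 2, with equality if and only if r = r₀. -/
open Real Set MeasureTheory intervalIntegral

theorem stmt11 (r₀ r : ℝ → ℝ)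
    (hr₀c : ContinuousOn r₀ (Icc 0 (2 * π))) (hr₀pos : ∀ t ∈ Icc (0 : ℝ) (2 * π), 0 < r₀ t)
    (hper : r₀ 0 = r₀ (2 * π))
    (harea₀ : (1 / 2) * (∫ t in (0 : ℝ)..(2 * π), r₀ t ^ 2) = 1)
    (hcos : (∫ t in (0 : ℝ)..(2 * π), r₀ t ^ 3 * Real.cos t) = 0)
    (hsin : (∫ t in (0 : ℝ)..(2 * π), r₀ t ^ 3 * Real.sin t) = 0)
    (hrc : ContinuousOn r (Icc 0 (2 * π))) (hrpos : ∀ t ∈ Icc (0 : ℝ) (2 * π), 0 < r t)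
    (harea : (1 / 2) * (∫ t in (0 : ℝ)..(2 * π), r t ^ 2) = 1) :
    2 ≤ (∫ t in (0 : ℝ)..(2 * π), r t ^ 3 / r₀ t) ∧
    ((∫ t in (0 : ℝ)..(2 * π), r t ^ 3 / r₀ t) = 2 ↔ ∀ t ∈ Icc (0 : ℝ) (2 * π), r t = r₀ t) := by
  have hπ : (0 : ℝ) < 2 * π := by positivity
  have huIcc : uIcc (0 : ℝ) (2 * π) = Icc 0 (2 * π) := uIcc_of_le hπ.le
  set G : ℝ → ℝ := fun t => (r t - r₀ t) ^ 2 * (r t + r₀ t / 2) / r₀ t with hG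
  have hGc : ContinuousOn G (Icc 0 (2 * π)) := by
    apply ContinuousOn.div
    · exact (((hrc.sub hr₀c).pow 2).mul (hrc.add (hr₀c.div_const 2)))
    · exact hr₀c
    · exact fun t ht => (hr₀pos t ht).ne'
  have hGnn : ∀ t ∈ Icc (0 : ℝ) (2 * π), 0 ≤ G t := fun t ht => by
    have h0 := hr₀pos t ht
    have h1 := hrpos t ht
    positivity
  have hkey : ∀ t ∈ Icc (0 : ℝ) (2 * π),
      r t ^ 3 / r₀ t = 3 / 2 * r t ^ 2 - 1 / 2 * r₀ t ^ 2 + G t := by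
    intro t ht
    have h0 : r₀ t ≠ 0 := (hr₀pos t ht).ne'
    simp only [hG]; field_simp
    ring
  have hrint : IntervalIntegrable (fun t => r t ^ 2) volume 0 (2 * π) :=
    (hrc.pow 2).intervalIntegrable_of_Icc hπ.le
  have hr₀int : IntervalIntegrable (fun t => r₀ t ^ 2) volume 0 (2 * π) :=
    (hr₀c.pow 2).intervalIntegrable_of_Icc hπ.le
  have hGint : IntervalIntegrable G volume 0 (2 * π) :=
    hGc.intervalIntegrable_of_Icc hπ.le
  have hsplit : (∫ t in (0 : ℝ)..(2 * π), r t ^ 3 / r₀ t)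
      = 2 + ∫ t in (0 : ℝ)..(2 * π), G t := by
    have : (∫ t in (0 : ℝ)..(2 * π), r t ^ 3 / r₀ t)
        = ∫ t in (0 : ℝ)..(2 * π), (3 / 2 * r t ^ 2 - 1 / 2 * r₀ t ^ 2 + G t) := by
      apply intervalIntegral.integral_congr
      intro t ht
      exact hkey t (huIcc ▸ ht)
    rw [this, intervalIntegral.integral_add ((hrint.const_mul _).sub (hr₀int.const_mul _)) hGint,
      intervalIntegral.integral_sub (hrint.const_mul _) (hr₀int.const_mul _),
      intervalIntegral.integral_const_mul, intervalIntegral.integral_const_mul]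
    have e1 : (∫ t in (0 : ℝ)..(2 * π), r t ^ 2) = 2 := by linarith
    have e2 : (∫ t in (0 : ℝ)..(2 * π), r₀ t ^ 2) = 2 := by linarith
    rw [e1, e2]; ring
  have hGnonneg : 0 ≤ ∫ t in (0 : ℝ)..(2 * π), G t :=
    intervalIntegral.integral_nonneg hπ.le (fun u hu => hGnn u hu)
  constructor
  · rw [hsplit]; linarith
  constructor
  · intro heq
    have hG0 : (∫ t in (0 : ℝ)..(2 * π), G t) = 0 := by rw [hsplit] at heq; linarith
    have hae : G =ᵐ[volume.restrict (Ioc (0 : ℝ) (2 * π))] 0 := by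
      rw [intervalIntegral.integral_eq_zero_iff_of_le_of_nonneg_ae hπ.le
        ((ae_restrict_iff' measurableSet_Ioc).2 (Filter.Eventually.of_forall
          fun t ht => hGnn t (Ioc_subset_Icc_self ht))) hGint] at hG0
      exact hG0
    rw [Measure.restrict_congr_set Ioc_ae_eq_Icc] at hae
    have heqOn : EqOn G 0 (Icc 0 (2 * π)) :=
      Measure.eqOn_Icc_of_ae_eq volume hπ.ne hae hGc continuousOn_const
    intro t ht
    have h0 := hr₀pos t ht
    have h1 := hrpos t ht
    have hGt : (r t - r₀ t) ^ 2 * (r t + r₀ t / 2) / r₀ t = 0 := heqOn ht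
    have hpos : 0 < r t + r₀ t / 2 := by linarith
    have : (r t - r₀ t) ^ 2 = 0 := by
      rcases mul_eq_zero.1 ((div_eq_zero_iff.1 hGt).resolve_right h0.ne') with h | h
      · exact h
      · linarith
    have := pow_eq_zero_iff (n := 2) (by norm_num) |>.1 this
    linarith
  · intro h
    have : (∫ t in (0 : ℝ)..(2 * π), r t ^ 3 / r₀ t)
        = ∫ t in (0 : ℝ)..(2 * π), r₀ t ^ 2 := by
      apply intervalIntegral.integral_congr
      intro t ht
      have ht' := huIcc ▸ ht
      have h0 : r₀ t ≠ 0 := (hr₀pos t ht').ne'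
      show r t ^ 3 / r₀ t = r₀ t ^ 2
      rw [h t ht']
      field_simp
    rw [this]; linarith
end
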